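/- arXiv:1309.3117 — 5 statements merged into one kernel-verified Lean document; each statement's English description precedes it below -/
import Mathlib

section
/- Let U ⊂ ℝ^d be a closed set containing 0 in its convex hull and let P_U = {u uᵀ : u ∈ U} ⊂ S_d^+. Then the set K = P_U° ∩ S_d^+ is the largest closed convex subset of S_d^+ satisfying: for all x in the linear span of U, γ_{U ∪ (−U)}(x)² = sup_{M ∈ K} xᵀ M x. Precisely, (i) this identity holds for K = P_U° ∩ S_d^+, and (ii) every closed convex K' ⊂ S_d^+ satisfying this identity is contained in P_U° ∩ S_d^+. -/
open Matrix Set ENNReal NNReal Pointwise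

noncomputable section

/-- The closed convex hull of `C ∪ {0}`. -/
def cvx {E : Type*} [AddCommGroup E] [Module ℝ E] [TopologicalSpace E] (C : Set E) : Set E :=
  closure (convexHull ℝ (insert 0 C))

/-- The (possibly infinite) gauge of the closed convex hull of `C ∪ {0}`:
`γ_C(x) = inf {λ ≥ 0 : x ∈ λ C}`. -/
def gaugeE {E : Type*} [AddCommGroup E] [Module ℝ E] [TopologicalSpace E] (C : Set E) (x : E) :
    ℝ≥0∞ :=
  ⨅ (r : ℝ≥0) (_ : x ∈ (r : ℝ) • cvx C), (r : ℝ≥0∞)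

/-- One-sided polar in the space `S_d` of symmetric matrices, with the trace pairing
`⟨M, N⟩ = tr (M N)`. -/
def symPolar {d : ℕ} (C : Set (Matrix (Fin d) (Fin d) ℝ)) : Set (Matrix (Fin d) (Fin d) ℝ) :=
  {N | N.IsSymm ∧ ∀ M ∈ C, (M * N).trace ≤ 1}

/-- `P_U = {u uᵀ : u ∈ U}`. -/
def PU {d : ℕ} (U : Set (Fin d → ℝ)) : Set (Matrix (Fin d) (Fin d) ℝ) :=
  (fun u => vecMulVec u u) '' U

variable {d : ℕ}

lemma trace_vecMulVec_mul (u : Fin d → ℝ) (M : Matrix (Fin d) (Fin d) ℝ) :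
    (vecMulVec u u * M).trace = u ⬝ᵥ M.mulVec u := by
  simp only [Matrix.trace, Matrix.diag, Matrix.mul_apply, vecMulVec_apply, dotProduct,
    Matrix.mulVec, Finset.mul_sum]
  rw [Finset.sum_comm]
  congr 1; ext k; congr 1; ext i; ring

lemma mulVec_vecMulVec (a x : Fin d → ℝ) :
    (vecMulVec a a).mulVec x = (a ⬝ᵥ x) • a := by
  ext i
  simp only [Matrix.mulVec, dotProduct, vecMulVec_apply, Pi.smul_apply, smul_eq_mul,
    Finset.sum_mul]
  congr 1; ext j; ring

lemma dotProduct_mulVec_vecMulVec (a x : Fin d → ℝ) :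
    x ⬝ᵥ (vecMulVec a a).mulVec x = (a ⬝ᵥ x) ^ 2 := by
  rw [mulVec_vecMulVec, dotProduct_smul]
  have h : x ⬝ᵥ a = a ⬝ᵥ x := dotProduct_comm x a
  simp [h, sq, smul_eq_mul]

lemma posSemidef_vecMulVec (a : Fin d → ℝ) : (vecMulVec a a).PosSemidef := by
  refine posSemidef_iff_dotProduct_mulVec.mpr ⟨?_, ?_⟩
  · ext i j
    simp [Matrix.conjTranspose_apply, vecMulVec_apply, mul_comm]
  · intro x
    have : star x = x := by funext i; simp
    rw [this, dotProduct_mulVec_vecMulVec]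
    positivity



variable {d : ℕ} (U : Set (Fin d → ℝ))

lemma zero_mem_cvx : (0 : Fin d → ℝ) ∈ cvx (U ∪ -U) :=
  subset_closure (subset_convexHull ℝ _ (mem_insert 0 _))

lemma subset_cvx : U ⊆ cvx (U ∪ -U) := fun _ hu =>
  subset_closure (subset_convexHull ℝ _ (mem_insert_of_mem _ (Or.inl hu)))

lemma neg_mem_cvx {u : Fin d → ℝ} (hu : u ∈ U) : -u ∈ cvx (U ∪ -U) :=
  subset_closure (subset_convexHull ℝ _ (mem_insert_of_mem _ (Or.inr (by simpa using hu))))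

lemma gaugeE_le_of_mem {E : Type*} [AddCommGroup E] [Module ℝ E] [TopologicalSpace E]
    {C : Set E} {x : E} {r : ℝ≥0} (h : x ∈ (r : ℝ) • cvx C) : gaugeE C x ≤ r :=
  iInf₂_le r h

lemma not_mem_of_lt_gaugeE {E : Type*} [AddCommGroup E] [Module ℝ E] [TopologicalSpace E]
    {C : Set E} {x : E} {r : ℝ≥0} (h : (r : ℝ≥0∞) < gaugeE C x) : x ∉ (r : ℝ) • cvx C :=
  fun hm => absurd (gaugeE_le_of_mem hm) (not_le.mpr h)

lemma quad_le_one_on_cvx {M : Matrix (Fin d) (Fin d) ℝ} (hM : M.PosSemidef)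
    (hU : ∀ u ∈ U, u ⬝ᵥ M.mulVec u ≤ 1) :
    ∀ v ∈ cvx (U ∪ -U), v ⬝ᵥ M.mulVec v ≤ 1 := by
  obtain ⟨B, rfl⟩ : ∃ B : Matrix (Fin d) (Fin d) ℝ, M = Bᴴ * B := by
    open scoped MatrixOrder in
    exact ⟨CFC.sqrt M, by
      have h0 : 0 ≤ M := Matrix.nonneg_iff_posSemidef.mpr hM
      have h1 : (CFC.sqrt M)ᴴ = CFC.sqrt M := (CFC.sqrt_nonneg M).isSelfAdjoint.star_eq
      rw [h1, CFC.sqrt_mul_sqrt_self M h0]⟩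
  set g : (Fin d → ℝ) →ₗ[ℝ] EuclideanSpace ℝ (Fin d) :=
    (WithLp.linearEquiv 2 ℝ (Fin d → ℝ)).symm.toLinearMap ∘ₗ B.mulVecLin with hg
  have key : ∀ v, v ⬝ᵥ (Bᴴ * B).mulVec v = ‖g v‖ ^ 2 := by
    intro v
    rw [← Matrix.mulVec_mulVec, Matrix.dotProduct_mulVec]
    have hBH : Bᴴ = Bᵀ := rfl
    rw [hBH, Matrix.vecMul_transpose]
    rw [EuclideanSpace.norm_eq]
    rw [Real.sq_sqrt (by positivity)]
    simp only [dotProduct, g, LinearMap.comp_apply, LinearEquiv.coe_toLinearMap]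
    refine Finset.sum_congr rfl fun i _ => ?_
    rw [Real.norm_eq_abs, sq_abs, sq]
    rfl
  have hsub : cvx (U ∪ -U) ⊆ {v | ‖g v‖ ≤ 1} := by
    apply closure_minimal
    · apply convexHull_min
      · rintro v (rfl | hv | hv)
        · simp
        · have h1 := hU v hv
          rw [key] at h1
          simp only [mem_setOf_eq]
          nlinarith [norm_nonneg (g v)]
        · have hv' : -v ∈ U := hv
          have h1 := hU (-v) hv'
          rw [key] at h1
          simp only [mem_setOf_eq]
          have : g (-v) = -(g v) := map_neg g v
          rw [this, norm_neg] at h1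
          nlinarith [norm_nonneg (g v)]
      · have heq : {v : Fin d → ℝ | ‖g v‖ ≤ 1} = ⇑g ⁻¹' Metric.closedBall 0 1 := by
          ext v; simp [Metric.mem_closedBall, dist_zero_right]
        rw [heq]
        exact (convex_closedBall _ _).linear_preimage g
    · have hc : Continuous g := g.continuous_of_finiteDimensional
      have heq : {v : Fin d → ℝ | ‖g v‖ ≤ 1} = ⇑g ⁻¹' Metric.closedBall 0 1 := by
        ext v; simp [Metric.mem_closedBall, dist_zero_right]
      rw [heq]
      exact Metric.isClosed_closedBall.preimage hc
  intro v hv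
  rw [key]
  have := hsub hv
  simp only [mem_setOf_eq] at this
  nlinarith [norm_nonneg (g v)]


variable {d : ℕ} (U : Set (Fin d → ℝ))

lemma ofReal_quad_le_gauge_sq {M : Matrix (Fin d) (Fin d) ℝ} (hM : M.PosSemidef)
    (hU : ∀ u ∈ U, u ⬝ᵥ M.mulVec u ≤ 1) (x : Fin d → ℝ) :
    ENNReal.ofReal (x ⬝ᵥ M.mulVec x) ≤ (gaugeE (U ∪ -U) x) ^ 2 := by
  have hx0 : 0 ≤ x ⬝ᵥ M.mulVec x := by
    have h := hM.dotProduct_mulVec_nonneg x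
    have hst : star x = x := by funext i; simp
    rwa [hst] at h
  have h1 : ENNReal.ofReal (Real.sqrt (x ⬝ᵥ M.mulVec x)) ≤ gaugeE (U ∪ -U) x := by
    refine le_iInf₂ fun r hr => ?_
    obtain ⟨v, hv, rfl⟩ := hr
    have hvle := quad_le_one_on_cvx U hM hU v hv
    have hv0 : 0 ≤ v ⬝ᵥ M.mulVec v := by
      have h := hM.dotProduct_mulVec_nonneg v
      have hst : star v = v := by funext i; simp
      rwa [hst] at h
    have heq : ((r : ℝ) • v) ⬝ᵥ M.mulVec ((r : ℝ) • v) = (r : ℝ) ^ 2 * (v ⬝ᵥ M.mulVec v) := by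
      rw [Matrix.mulVec_smul, dotProduct_smul, smul_dotProduct]
      simp [smul_eq_mul]; ring
    rw [heq]
    have hsq : Real.sqrt ((r : ℝ) ^ 2 * (v ⬝ᵥ M.mulVec v)) ≤ (r : ℝ) := by
      calc Real.sqrt ((r : ℝ) ^ 2 * (v ⬝ᵥ M.mulVec v)) ≤ Real.sqrt ((r : ℝ) ^ 2 * 1) :=
            Real.sqrt_le_sqrt (by nlinarith [r.coe_nonneg])
        _ = (r : ℝ) := by rw [mul_one, Real.sqrt_sq r.coe_nonneg]
    calc ENNReal.ofReal (Real.sqrt ((r : ℝ) ^ 2 * (v ⬝ᵥ M.mulVec v)))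
        ≤ ENNReal.ofReal (r : ℝ) := ENNReal.ofReal_le_ofReal hsq
      _ = (r : ℝ≥0∞) := ENNReal.ofReal_coe_nnreal
  calc ENNReal.ofReal (x ⬝ᵥ M.mulVec x)
      = (ENNReal.ofReal (Real.sqrt (x ⬝ᵥ M.mulVec x))) ^ 2 := by
        rw [← ENNReal.ofReal_pow (Real.sqrt_nonneg _), Real.sq_sqrt hx0]
    _ ≤ (gaugeE (U ∪ -U) x) ^ 2 := by gcongr

lemma isSymm_vecMulVec (a : Fin d → ℝ) : (vecMulVec a a).IsSymm := by
  ext i j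
  simp [Matrix.transpose_apply, vecMulVec_apply, mul_comm]

lemma le_sup_of_mem {x : Fin d → ℝ} {M : Matrix (Fin d) (Fin d) ℝ}
    (hM : M ∈ symPolar (PU U) ∩ {M | M.PosSemidef}) :
    ENNReal.ofReal (x ⬝ᵥ M.mulVec x) ≤
      ⨆ N ∈ symPolar (PU U) ∩ {N | N.PosSemidef}, ENNReal.ofReal (x ⬝ᵥ N.mulVec x) := by
  have h1 : ENNReal.ofReal (x ⬝ᵥ M.mulVec x)
      ≤ ⨆ (_ : M ∈ symPolar (PU U) ∩ {N | N.PosSemidef}), ENNReal.ofReal (x ⬝ᵥ M.mulVec x) :=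
    le_iSup (fun _ : M ∈ symPolar (PU U) ∩ {N | N.PosSemidef} =>
      ENNReal.ofReal (x ⬝ᵥ M.mulVec x)) hM
  exact h1.trans (le_iSup (fun N => ⨆ (_ : N ∈ symPolar (PU U) ∩ {N | N.PosSemidef}),
    ENNReal.ofReal (x ⬝ᵥ N.mulVec x)) M)

set_option maxHeartbeats 1000000 in
lemma gauge_sq_le_sup (x : Fin d → ℝ) :
    (gaugeE (U ∪ -U) x) ^ 2 ≤
      ⨆ M ∈ symPolar (PU U) ∩ {M | M.PosSemidef}, ENNReal.ofReal (x ⬝ᵥ M.mulVec x) := by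
  refine ENNReal.le_of_forall_nnreal_lt fun r hr => ?_
  set t := NNReal.sqrt r with htdef
  have ht2 : ((t : ℝ≥0∞)) ^ 2 = (r : ℝ≥0∞) := by
    rw [← ENNReal.coe_pow]; norm_cast; exact NNReal.sq_sqrt r
  have htlt : (t : ℝ≥0∞) < gaugeE (U ∪ -U) x := by
    by_contra hle
    push_neg at hle
    have : (gaugeE (U ∪ -U) x) ^ 2 ≤ (r : ℝ≥0∞) := by
      rw [← ht2]; gcongr
    exact absurd hr (not_lt.mpr this)
  rcases eq_or_ne t 0 with ht0 | ht0
  · have : (r : ℝ≥0∞) = 0 := by rw [← ht2, ht0]; simp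
    rw [this]; exact zero_le
  have htpos : (0 : ℝ) < (t : ℝ) := by positivity
  have hxnot : x ∉ (t : ℝ) • cvx (U ∪ -U) := not_mem_of_lt_gaugeE htlt
  have hclosed : IsClosed ((t : ℝ) • cvx (U ∪ -U)) :=
    isClosed_closure.smul_of_ne_zero (by exact_mod_cast ht0)
  have hconv : Convex ℝ ((t : ℝ) • cvx (U ∪ -U)) :=
    ((convex_convexHull ℝ _).closure).smul _
  obtain ⟨f, c, hfc, hcx⟩ := geometric_hahn_banach_closed_point hconv hclosed hxnot
  have hc0 : (0 : ℝ) < c := by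
    have h0 : (0 : Fin d → ℝ) ∈ (t : ℝ) • cvx (U ∪ -U) :=
      ⟨0, zero_mem_cvx U, smul_zero _⟩
    have := hfc 0 h0
    simpa using this
  set a : Fin d → ℝ := fun i => ((t : ℝ) / c) * f (Pi.single i 1) with ha
  have hfa : ∀ y : Fin d → ℝ, a ⬝ᵥ y = ((t : ℝ) / c) * f y := by
    intro y
    have hy : y = ∑ i, Pi.single i (y i) := by rw [Finset.univ_sum_single]
    conv_rhs => rw [hy]
    rw [map_sum, Finset.mul_sum]
    simp only [dotProduct, ha]
    refine Finset.sum_congr rfl fun i _ => ?_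
    have h1 : Pi.single i (y i) = y i • (Pi.single i 1 : Fin d → ℝ) := by
      funext j
      simp [Pi.single_apply, smul_eq_mul, mul_ite]
    rw [h1, _root_.map_smul, smul_eq_mul]
    ring
  have haV : ∀ v ∈ cvx (U ∪ -U), a ⬝ᵥ v ≤ 1 := by
    intro v hv
    have hmem : (t : ℝ) • v ∈ (t : ℝ) • cvx (U ∪ -U) := smul_mem_smul_set hv
    have := hfc _ hmem
    rw [_root_.map_smul, smul_eq_mul] at this
    rw [hfa v]
    rw [div_mul_eq_mul_div, div_le_one hc0]
    nlinarith
  have haU : ∀ u ∈ U, (a ⬝ᵥ u) ^ 2 ≤ 1 := by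
    intro u hu
    have h1 := haV u (subset_cvx U hu)
    have h2 := haV (-u) (neg_mem_cvx U hu)
    rw [dotProduct_neg] at h2
    nlinarith
  set M : Matrix (Fin d) (Fin d) ℝ := vecMulVec a a with hMdef
  have hMmem : M ∈ symPolar (PU U) ∩ {M | M.PosSemidef} := by
    refine ⟨⟨isSymm_vecMulVec a, ?_⟩, posSemidef_vecMulVec a⟩
    rintro M' ⟨u, hu, rfl⟩
    rw [trace_vecMulVec_mul, dotProduct_mulVec_vecMulVec]
    exact haU u hu
  have hax : (t : ℝ) < a ⬝ᵥ x := by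
    rw [hfa x]
    rw [div_mul_eq_mul_div, lt_div_iff₀ hc0]
    nlinarith
  have hquad : ((t : ℝ)) ^ 2 ≤ x ⬝ᵥ M.mulVec x := by
    rw [hMdef, dotProduct_mulVec_vecMulVec]
    nlinarith
  calc (r : ℝ≥0∞) = (t : ℝ≥0∞) ^ 2 := ht2.symm
    _ = ENNReal.ofReal ((t : ℝ) ^ 2) := by
        rw [ENNReal.ofReal_pow t.coe_nonneg, ENNReal.ofReal_coe_nnreal]
    _ ≤ ENNReal.ofReal (x ⬝ᵥ M.mulVec x) := ENNReal.ofReal_le_ofReal hquad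
    _ ≤ ⨆ M ∈ symPolar (PU U) ∩ {M | M.PosSemidef}, ENNReal.ofReal (x ⬝ᵥ M.mulVec x) :=
        le_sup_of_mem U hMmem


/-- For a closed set `U ⊂ ℝ^d` containing `0` in its convex hull, `K = P_U° ∩ S_d^+` is the
largest closed convex set of positive semidefinite matrices such that
`γ_{U ∪ (−U)}(x)² = sup_{M ∈ K} xᵀ M x` for all `x` in the span of `U`. -/
theorem statement0 {d : ℕ} (U : Set (Fin d → ℝ)) (hUc : IsClosed U)
    (hU0 : (0 : Fin d → ℝ) ∈ convexHull ℝ U) :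
    (∀ x ∈ Submodule.span ℝ U,
        (gaugeE (U ∪ -U) x) ^ 2 =
          ⨆ M ∈ symPolar (PU U) ∩ {M | M.PosSemidef},
            ENNReal.ofReal (x ⬝ᵥ M.mulVec x)) ∧
    (∀ K' : Set (Matrix (Fin d) (Fin d) ℝ), IsClosed K' → Convex ℝ K' →
        K' ⊆ {M | M.PosSemidef} →
        (∀ x ∈ Submodule.span ℝ U,
          (gaugeE (U ∪ -U) x) ^ 2 = ⨆ M ∈ K', ENNReal.ofReal (x ⬝ᵥ M.mulVec x)) →
        K' ⊆ symPolar (PU U) ∩ {M | M.PosSemidef}) := by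
  constructor
  · intro x _
    refine le_antisymm (gauge_sq_le_sup U x) ?_
    refine iSup_le fun M => iSup_le fun hM => ?_
    refine ofReal_quad_le_gauge_sq U hM.2 (fun u hu => ?_) x
    have ht := hM.1.2 (vecMulVec u u) ⟨u, hu, rfl⟩
    rwa [trace_vecMulVec_mul] at ht
  · intro K' _ _ hpsd hiden M hM
    refine ⟨⟨?_, ?_⟩, hpsd hM⟩
    · exact (hpsd hM).1
    · rintro M' ⟨u, hu, rfl⟩
      rw [trace_vecMulVec_mul]
      have hx := hiden u (Submodule.subset_span hu)
      have hg : gaugeE (U ∪ -U) u ≤ 1 := by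
        have hmem : u ∈ ((1 : ℝ≥0) : ℝ) • cvx (U ∪ -U) :=
          ⟨u, subset_cvx U hu, by norm_num⟩
        simpa using gaugeE_le_of_mem hmem
      have hsup : (⨆ N ∈ K', ENNReal.ofReal (u ⬝ᵥ N.mulVec u)) ≤ 1 := by
        rw [← hx]
        calc (gaugeE (U ∪ -U) u) ^ 2 ≤ 1 ^ 2 := by gcongr
          _ = 1 := one_pow 2
      have h1 : ENNReal.ofReal (u ⬝ᵥ M.mulVec u)
          ≤ ⨆ (_ : M ∈ K'), ENNReal.ofReal (u ⬝ᵥ M.mulVec u) :=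
        le_iSup (fun _ : M ∈ K' => ENNReal.ofReal (u ⬝ᵥ M.mulVec u)) hM
      have h2 : ENNReal.ofReal (u ⬝ᵥ M.mulVec u) ≤ 1 :=
        (h1.trans (le_iSup (fun N => ⨆ (_ : N ∈ K'), ENNReal.ofReal (u ⬝ᵥ N.mulVec u)) M)).trans
          hsup
      exact ENNReal.ofReal_le_one.mp h2


end
end

section
/- For p ∈ [1,2) and every x ∈ ℝ^d, the squared ℓ_p-norm has the variational representation ‖x‖_p² = inf { Σ_{i=1}^d x_i²/η_i : η ∈ ℝ_+^d, ‖η‖_{p/(2−p)} ≤ 1, η_i > 0 whenever x_i ≠ 0 }. -/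
open Matrix Set

noncomputable section

/-- For `p ∈ [1, 2)` and `x ∈ ℝ^d`,
`‖x‖_p² = inf {Σ x_i²/η_i : η ≥ 0, ‖η‖_{p/(2−p)} ≤ 1, η_i > 0 whenever x_i ≠ 0}`. -/
theorem statement5 {d : ℕ} (p : ℝ) (hp1 : 1 ≤ p) (hp2 : p < 2) (x : Fin d → ℝ) :
    ((∑ i, |x i| ^ p) ^ (1 / p)) ^ 2 =
      sInf {s : ℝ | ∃ η : Fin d → ℝ, (∀ i, 0 ≤ η i) ∧
        (∑ i, η i ^ (p / (2 - p))) ^ ((2 - p) / p) ≤ 1 ∧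
        (∀ i, x i ≠ 0 → 0 < η i) ∧
        s = ∑ i, (x i) ^ 2 / η i} := by
  have hp0 : (0:ℝ) < p := by linarith
  have h2p : (0:ℝ) < 2 - p := by linarith
  set S : ℝ := ∑ i, |x i| ^ p with hSdef
  have hSnn : 0 ≤ S := Finset.sum_nonneg fun i _ => Real.rpow_nonneg (abs_nonneg _) _
  set N : ℝ := S ^ (1/p) with hNdef
  have hNnn : 0 ≤ N := Real.rpow_nonneg hSnn _
  have hN2 : N ^ 2 = S ^ (2/p) := by
    rw [hNdef, ← Real.rpow_natCast (S ^ (1/p)) 2, ← Real.rpow_mul hSnn]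
    norm_num
    congr 1
    ring
  -- lower bound
  have hlb : ∀ s ∈ {s : ℝ | ∃ η : Fin d → ℝ, (∀ i, 0 ≤ η i) ∧
        (∑ i, η i ^ (p / (2 - p))) ^ ((2 - p) / p) ≤ 1 ∧
        (∀ i, x i ≠ 0 → 0 < η i) ∧
        s = ∑ i, (x i) ^ 2 / η i}, N ^ 2 ≤ s := by
    rintro s ⟨η, hη0, hηle, hηpos, rfl⟩
    set T : ℝ := ∑ i, (x i) ^ 2 / η i with hTdef
    set C : ℝ := ∑ i, η i ^ (p / (2 - p)) with hCdef
    have hTnn : 0 ≤ T := Finset.sum_nonneg fun i _ => div_nonneg (sq_nonneg _) (hη0 i)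
    have hCnn : 0 ≤ C := Finset.sum_nonneg fun i _ => Real.rpow_nonneg (hη0 i) _
    have hC1 : C ≤ 1 := by
      have h1 : C = (C ^ ((2-p)/p)) ^ (p/(2-p)) := by
        rw [← Real.rpow_mul hCnn]
        rw [show (2-p)/p * (p/(2-p)) = 1 by field_simp, Real.rpow_one]
      rw [h1]
      calc (C ^ ((2-p)/p)) ^ (p/(2-p)) ≤ 1 ^ (p/(2-p)) :=
            Real.rpow_le_rpow (Real.rpow_nonneg hCnn _) hηle (by positivity)
        _ = 1 := Real.one_rpow _
    have hconj : Real.HolderConjugate (2/p) (2/(2-p)) := by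
      rw [Real.holderConjugate_iff]
      constructor
      · rw [lt_div_iff₀ hp0]; linarith
      · rw [show ((2:ℝ)/p)⁻¹ = p/2 by field_simp, show ((2:ℝ)/(2-p))⁻¹ = (2-p)/2 by field_simp]
        ring
    have H := Real.inner_le_Lp_mul_Lq_of_nonneg (s := Finset.univ) hconj
      (f := fun i => ((x i)^2 / η i) ^ (p/2)) (g := fun i => (η i) ^ (p/2))
      (fun i _ => Real.rpow_nonneg (div_nonneg (sq_nonneg _) (hη0 i)) _)
      (fun i _ => Real.rpow_nonneg (hη0 i) _)
    have e1 : ∀ i, ((x i)^2 / η i) ^ (p/2) * (η i) ^ (p/2) = |x i| ^ p := by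
      intro i
      by_cases hxi : x i = 0
      · simp [hxi, Real.zero_rpow (by positivity : p/2 ≠ 0), Real.zero_rpow hp0.ne']
      · have hηi : 0 < η i := hηpos i hxi
        rw [← Real.mul_rpow (div_nonneg (sq_nonneg _) hηi.le) hηi.le,
          div_mul_cancel₀ _ hηi.ne', ← sq_abs, ← Real.rpow_natCast (|x i|) 2,
          ← Real.rpow_mul (abs_nonneg _)]
        norm_num
        congr 1
        ring
    have e2 : ∀ i, (((x i)^2 / η i) ^ (p/2)) ^ ((2:ℝ)/p) = (x i)^2 / η i := by
      intro i
      rw [← Real.rpow_mul (div_nonneg (sq_nonneg _) (hη0 i)),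
        show p/2 * (2/p) = 1 by field_simp, Real.rpow_one]
    have e3 : ∀ i, ((η i) ^ (p/2)) ^ ((2:ℝ)/(2-p)) = η i ^ (p/(2-p)) := by
      intro i
      rw [← Real.rpow_mul (hη0 i)]
      congr 1
      field_simp
    simp only [e1, e2, e3, one_div_div] at H
    have hST : S ≤ T ^ (p/2) := by
      refine le_trans H ?_
      rw [hTdef, hCdef] at *
      exact mul_le_of_le_one_right (Real.rpow_nonneg hTnn _)
        (Real.rpow_le_one hCnn hC1 (by positivity))
    calc N ^ 2 = S ^ (2/p) := hN2
      _ ≤ (T ^ (p/2)) ^ ((2:ℝ)/p) := Real.rpow_le_rpow hSnn hST (by positivity)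
      _ = T := by
          rw [← Real.rpow_mul hTnn, show p/2 * (2/p) = 1 by field_simp, Real.rpow_one]
  -- membership
  have hmem : N ^ 2 ∈ {s : ℝ | ∃ η : Fin d → ℝ, (∀ i, 0 ≤ η i) ∧
        (∑ i, η i ^ (p / (2 - p))) ^ ((2 - p) / p) ≤ 1 ∧
        (∀ i, x i ≠ 0 → 0 < η i) ∧
        s = ∑ i, (x i) ^ 2 / η i} := by
    by_cases hx : ∀ i, x i = 0
    · refine ⟨fun _ => 0, fun _ => le_refl 0, ?_, fun i hi => absurd (hx i) hi, ?_⟩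
      · simp [Real.zero_rpow (by positivity : p/(2-p) ≠ 0),
          Real.zero_rpow (by positivity : (2-p)/p ≠ 0)]
      · have hS0 : S = 0 := by
          rw [hSdef]
          refine Finset.sum_eq_zero fun i _ => ?_
          rw [hx i]; simp [Real.zero_rpow hp0.ne']
        simp [hNdef, hS0, Real.zero_rpow (show p⁻¹ ≠ 0 by positivity), hx]
    · push_neg at hx
      obtain ⟨i0, hi0⟩ := hx
      have hSpos : 0 < S := by
        rw [hSdef]
        refine lt_of_lt_of_le (Real.rpow_pos_of_pos (abs_pos.mpr hi0) p) ?_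
        exact Finset.single_le_sum (fun i _ => Real.rpow_nonneg (abs_nonneg _) _)
          (Finset.mem_univ i0)
      have hNpos : 0 < N := Real.rpow_pos_of_pos hSpos _
      have hNp : N ^ p = S := by
        rw [hNdef, ← Real.rpow_mul hSnn, one_div_mul_cancel hp0.ne', Real.rpow_one]
      refine ⟨fun i => (|x i| / N) ^ (2-p), fun i => Real.rpow_nonneg
        (div_nonneg (abs_nonneg _) hNnn) _, ?_, fun i hi =>
        Real.rpow_pos_of_pos (div_pos (abs_pos.mpr hi) hNpos) _, ?_⟩
      · have ht : ∀ i : Fin d, ((|x i| / N) ^ (2-p)) ^ (p/(2-p)) = |x i| ^ p / N ^ p := by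
          intro i
          rw [← Real.rpow_mul (div_nonneg (abs_nonneg _) hNnn),
            show (2-p) * (p/(2-p)) = p by field_simp,
            Real.div_rpow (abs_nonneg _) hNnn]
        rw [Finset.sum_congr rfl fun i _ => ht i, ← Finset.sum_div, ← hSdef, hNp,
          div_self hSpos.ne', Real.one_rpow]
      · have ht : ∀ i : Fin d, (x i) ^ 2 / ((|x i| / N) ^ (2-p)) = |x i| ^ p * N ^ (2-p) := by
          intro i
          by_cases hxi : x i = 0
          · simp [hxi, Real.zero_rpow hp0.ne']
          · have hax : 0 < |x i| := abs_pos.mpr hxi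
            rw [Real.div_rpow (abs_nonneg _) hNnn, div_div_eq_mul_div,
              mul_div_right_comm, ← sq_abs, ← Real.rpow_natCast (|x i|) 2,
              ← Real.rpow_sub hax]
            norm_num
        rw [Finset.sum_congr rfl fun i _ => ht i, ← Finset.sum_mul, ← hSdef, ← hNp,
          ← Real.rpow_natCast N 2, ← Real.rpow_add hNpos]
        norm_num
  exact le_antisymm (le_csInf ⟨_, hmem⟩ hlb) (csInf_le ⟨N ^ 2, hlb⟩ hmem)


end
end

section
/- Let U ⊂ ℝ^n and V ⊂ ℝ^d be compact sets each containing 0 in its convex hull, and let Θ be the gauge function on ℝ^{n×d} of the set {u vᵀ : u ∈ U, v ∈ V}. Then for every X ∈ ℝ^{n×d}, Θ(X) equals each of the following (where all infima are over integers r ≥ 0 and finite decompositions X = Σ_{m=1}^r u_m v_mᵀ): (i) inf of (1/2) Σ_{m=1}^r (γ_U(u_m)² + γ_V(v_m)²); (ii) inf of Σ_{m=1}^r γ_U(u_m) γ_V(v_m); (iii) inf over decompositions with all u_m ∈ U of Σ_{m=1}^r γ_V(v_m); (iv) inf over decompositions with all v_m ∈ V of Σ_{m=1}^r γ_U(u_m).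 -/
open Matrix Set ENNReal NNReal Pointwise

noncomputable section

/-- `Θ(X)`: the gauge of `{u vᵀ : u ∈ U, v ∈ V}`, as the infimum of `Σ λ_m` over
decompositions `X = Σ λ_m u_m v_mᵀ`, `λ_m ≥ 0`, `u_m ∈ U`, `v_m ∈ V`. -/
def Theta {n d : ℕ} (U : Set (Fin n → ℝ)) (V : Set (Fin d → ℝ))
    (X : Matrix (Fin n) (Fin d) ℝ) : ℝ≥0∞ :=
  sInf {t : ℝ≥0∞ | ∃ (r : ℕ) (lam : Fin r → ℝ) (u : Fin r → Fin n → ℝ)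
    (v : Fin r → Fin d → ℝ),
    (∀ m, 0 ≤ lam m) ∧ (∀ m, u m ∈ U) ∧ (∀ m, v m ∈ V) ∧
    X = ∑ m, lam m • vecMulVec (u m) (v m) ∧ t = ENNReal.ofReal (∑ m, lam m)}

namespace Statement6Aux

open Filter Topology Finset

/-! ### Compactness of the convex hull of a compact set in `Fin k → ℝ` -/

lemma isCompact_convexHull' {k : ℕ} {s : Set (Fin k → ℝ)} (hs : IsCompact s) :
    IsCompact (convexHull ℝ s) := by
  rcases s.eq_empty_or_nonempty with rfl | ⟨s₀, hs₀⟩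
  · simp
  set N := Module.finrank ℝ (Fin k → ℝ) + 1 with hN
  set g : (Fin N → ℝ) × (Fin N → Fin k → ℝ) → (Fin k → ℝ) :=
    fun p => ∑ i, p.1 i • p.2 i with hg
  have hcont : Continuous g := by
    apply continuous_finset_sum
    intro i _
    exact ((continuous_apply i).comp continuous_fst).smul
      ((continuous_apply i).comp continuous_snd)
  have himage : convexHull ℝ s =
      g '' (stdSimplex ℝ (Fin N) ×ˢ Set.pi Set.univ fun _ : Fin N => s) := by
    apply Set.Subset.antisymm
    · intro x hx
      obtain ⟨ι, hfin, z, w, hzs, hai, hw0, hw1, hxe⟩ :=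
        eq_pos_convex_span_of_mem_convexHull hx
      set m := Fintype.card ι with hm
      have hmN : m ≤ N := by
        have h1 := hai.card_le_finrank_succ
        have h2 : Module.finrank ℝ (vectorSpan ℝ (Set.range z)) ≤
            Module.finrank ℝ (Fin k → ℝ) := Submodule.finrank_le _
        omega
      set e := Fintype.equivFin ι with he
      set W : Fin N → ℝ := fun j => if h : (j : ℕ) < m then w (e.symm ⟨j, h⟩) else 0 with hW
      set Z : Fin N → Fin k → ℝ := fun j => if h : (j : ℕ) < m then z (e.symm ⟨j, h⟩) else s₀
        with hZ
      have hT : (Finset.univ.map (Fin.castLEEmb hmN) : Finset (Fin N)) =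
          Finset.univ.filter fun j : Fin N => (j : ℕ) < m := by
        ext j
        simp only [Finset.mem_map, Finset.mem_univ, true_and, Finset.mem_filter,
          Fin.castLEEmb_apply]
        constructor
        · rintro ⟨i, rfl⟩; exact i.2
        · rintro hj; exact ⟨⟨j, hj⟩, rfl⟩
      have hsum : ∀ {M : Type} [AddCommMonoid M] (F : Fin N → M),
          (∀ (j : Fin N), ¬ ((j:ℕ) < m) → F j = 0) →
          ∑ j, F j = ∑ i : Fin m, F (Fin.castLE hmN i) := by
        intro M _ F hF
        rw [← Finset.sum_subset (Finset.subset_univ (Finset.univ.map (Fin.castLEEmb hmN)))]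
        · rw [Finset.sum_map]; rfl
        · intro j _ hj
          rw [hT] at hj
          simp only [Finset.mem_filter, Finset.mem_univ, true_and] at hj
          exact hF j hj
      refine ⟨(W, Z), ⟨⟨?_, ?_⟩, ?_⟩, ?_⟩
      · intro j
        simp only [hW]
        split_ifs with h
        · exact (hw0 _).le
        · exact le_rfl
      · rw [hsum W (fun (j : Fin N) hj => by simp only [hW]; rw [dif_neg hj])]
        rw [← hw1, ← Equiv.sum_comp e.symm w]
        apply Finset.sum_congr rfl
        intro i _
        simp only [hW, Fin.coe_castLE, i.is_lt, dif_pos, Fin.eta]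
      · intro j _
        simp only [hZ]
        split_ifs with h
        · exact hzs (Set.mem_range_self _)
        · exact hs₀
      · show ∑ j, W j • Z j = x
        rw [hsum (fun j => W j • Z j) (fun j hj => by
          simp only [hW, hZ]; rw [dif_neg hj, zero_smul])]
        rw [← hxe, ← Equiv.sum_comp e.symm fun i => w i • z i]
        apply Finset.sum_congr rfl
        intro i _
        simp only [hW, hZ, Fin.coe_castLE, i.is_lt, dif_pos, Fin.eta]
    · rintro x ⟨⟨w, z⟩, ⟨⟨hw0, hw1⟩, hzmem⟩, rfl⟩
      have hmem : ∀ i ∈ (Finset.univ : Finset (Fin N)), z i ∈ s := by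
        intro i _
        exact hzmem i (Set.mem_univ i)
      have := Finset.centerMass_mem_convexHull (Finset.univ : Finset (Fin N))
        (fun i _ => hw0 i) (by rw [hw1]; norm_num) hmem
      rwa [Finset.centerMass_eq_of_sum_1 _ _ hw1] at this
  rw [himage]
  exact ((isCompact_stdSimplex (𝕜 := ℝ) (ι := Fin N)).prod (isCompact_univ_pi fun _ => hs)).image hcont

/-! ### Basic facts about `gaugeE` -/

section gauge
variable {E : Type*} [AddCommGroup E] [Module ℝ E] [TopologicalSpace E] {C : Set E} {x : E}

lemma mem_cvx (h : x ∈ C) : x ∈ cvx C :=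
  subset_closure (subset_convexHull ℝ _ (Set.mem_insert_of_mem _ h))

lemma gaugeE_le_of_mem {c : ℝ≥0} (hx : x ∈ (c : ℝ) • cvx C) : gaugeE C x ≤ (c : ℝ≥0∞) :=
  iInf_le_of_le c (iInf_le _ hx)

lemma gaugeE_le_ofReal {c : ℝ} (hc : 0 ≤ c) (hx : x ∈ c • cvx C) :
    gaugeE C x ≤ ENNReal.ofReal c := by
  have : x ∈ ((c.toNNReal : ℝ)) • cvx C := by rwa [Real.coe_toNNReal c hc]
  exact gaugeE_le_of_mem this

lemma gaugeE_le_one (hx : x ∈ cvx C) : gaugeE C x ≤ 1 := by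
  have : x ∈ ((1 : ℝ≥0) : ℝ) • cvx C := by
    rw [NNReal.coe_one, one_smul]; exact hx
  simpa using gaugeE_le_of_mem this

end gauge

lemma cvx_eq {k : ℕ} {C : Set (Fin k → ℝ)} (hC : IsCompact C)
    (h0 : (0 : Fin k → ℝ) ∈ convexHull ℝ C) : cvx C = convexHull ℝ C := by
  have h1 : convexHull ℝ (insert 0 C) = convexHull ℝ C :=
    Set.Subset.antisymm
      (convexHull_min (Set.insert_subset h0 (subset_convexHull ℝ C)) (convex_convexHull ℝ C))
      (convexHull_mono (Set.subset_insert _ _))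
  rw [cvx, h1, ((isCompact_convexHull' hC).isClosed).closure_eq]

lemma gaugeE_exists {k : ℕ} {C : Set (Fin k → ℝ)} (hC : IsCompact C)
    (h0 : (0 : Fin k → ℝ) ∈ convexHull ℝ C) {x : Fin k → ℝ} (hx : gaugeE C x ≠ ⊤) :
    ∃ (a : ℝ) (p : Fin k → ℝ), 0 ≤ a ∧ gaugeE C x = ENNReal.ofReal a ∧
      p ∈ convexHull ℝ C ∧ x = a • p := by
  have hcvx : cvx C = convexHull ℝ C := cvx_eq hC h0
  set K := convexHull ℝ C with hK
  have hKc : IsCompact K := isCompact_convexHull' hC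
  set S : Set ℝ≥0 := {r | x ∈ (r : ℝ) • K} with hS
  have hSne : S.Nonempty := by
    by_contra h
    rw [Set.not_nonempty_iff_eq_empty] at h
    apply hx
    rw [gaugeE]
    rw [iInf_eq_top]
    intro r
    apply iInf_eq_top.2
    intro hr
    rw [hcvx] at hr
    exact absurd (Set.eq_empty_iff_forall_notMem.1 h r hr) (fun h => h)
  have hScl : IsClosed S := by
    apply IsSeqClosed.isClosed
    intro rs r hrs hlim
    have hmem : ∀ n, ∃ y ∈ K, ((rs n : ℝ)) • y = x := fun n => hrs n
    choose c hcK hcx using hmem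
    obtain ⟨y, hyK, φ, hφ, hy⟩ := hKc.tendsto_subseq hcK
    have h1 : Tendsto (fun j => ((rs (φ j) : ℝ))) atTop (𝓝 (r : ℝ)) :=
      (NNReal.continuous_coe.tendsto r).comp ((hlim.comp hφ.tendsto_atTop))
    have h2 : Tendsto (fun j => ((rs (φ j) : ℝ)) • c (φ j)) atTop (𝓝 ((r : ℝ) • y)) :=
      h1.smul hy
    have h3 : (fun j => ((rs (φ j) : ℝ)) • c (φ j)) = fun _ => x := by
      funext j; exact hcx (φ j)
    rw [h3] at h2
    have h4 : x = (r : ℝ) • y := tendsto_nhds_unique tendsto_const_nhds h2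
    exact ⟨y, hyK, h4.symm⟩
  set a := sInf S with ha
  have haS : a ∈ S := hScl.csInf_mem hSne (OrderBot.bddBelow S)
  obtain ⟨p, hpK, hpx⟩ := haS
  refine ⟨(a : ℝ), p, a.2, ?_, hpK, hpx.symm⟩
  rw [ENNReal.ofReal_coe_nnreal]
  apply le_antisymm
  · apply gaugeE_le_of_mem
    rw [hcvx]
    exact ⟨p, hpK, hpx⟩
  · rw [gaugeE]
    apply le_iInf; intro r; apply le_iInf; intro hr
    rw [hcvx] at hr
    exact ENNReal.coe_le_coe.2 (csInf_le (OrderBot.bddBelow S) hr)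

/-! ### `vecMulVec` algebra -/

lemma vmv_smul_left {n d : ℕ} (c : ℝ) (u : Fin n → ℝ) (v : Fin d → ℝ) :
    vecMulVec (c • u) v = c • vecMulVec u v := by
  ext i j
  simp [vecMulVec_apply, smul_eq_mul, mul_assoc]

lemma vmv_smul_right {n d : ℕ} (c : ℝ) (u : Fin n → ℝ) (v : Fin d → ℝ) :
    vecMulVec u (c • v) = c • vecMulVec u v := by
  ext i j
  simp [vecMulVec_apply, smul_eq_mul]
  ring

lemma vmv_sum_left {n d : ℕ} {ι : Type*} (s : Finset ι) (f : ι → Fin n → ℝ) (v : Fin d → ℝ) :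
    vecMulVec (∑ i ∈ s, f i) v = ∑ i ∈ s, vecMulVec (f i) v := by
  ext i j
  simp [vecMulVec_apply, Matrix.sum_apply, Finset.sum_apply, Finset.sum_mul]

lemma vmv_sum_right {n d : ℕ} {ι : Type*} (s : Finset ι) (u : Fin n → ℝ) (f : ι → Fin d → ℝ) :
    vecMulVec u (∑ i ∈ s, f i) = ∑ i ∈ s, vecMulVec u (f i) := by
  ext i j
  simp [vecMulVec_apply, Matrix.sum_apply, Finset.sum_apply, Finset.mul_sum]

lemma vmv_zero_right {n d : ℕ} (u : Fin n → ℝ) : vecMulVec u (0 : Fin d → ℝ) = 0 := by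
  ext i j; simp [vecMulVec_apply]

lemma vmv_zero_left {n d : ℕ} (v : Fin d → ℝ) : vecMulVec (0 : Fin n → ℝ) v = 0 := by
  ext i j; simp [vecMulVec_apply]

/-! ### The decomposition set of `Theta` -/

def TS {n d : ℕ} (U : Set (Fin n → ℝ)) (V : Set (Fin d → ℝ))
    (X : Matrix (Fin n) (Fin d) ℝ) : Set ℝ≥0∞ :=
  {t : ℝ≥0∞ | ∃ (r : ℕ) (lam : Fin r → ℝ) (u : Fin r → Fin n → ℝ)
    (v : Fin r → Fin d → ℝ),
    (∀ m, 0 ≤ lam m) ∧ (∀ m, u m ∈ U) ∧ (∀ m, v m ∈ V) ∧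
    X = ∑ m, lam m • vecMulVec (u m) (v m) ∧ t = ENNReal.ofReal (∑ m, lam m)}

lemma Theta_eq_sInf_TS {n d : ℕ} (U : Set (Fin n → ℝ)) (V : Set (Fin d → ℝ))
    (X : Matrix (Fin n) (Fin d) ℝ) : Theta U V X = sInf (TS U V X) := rfl

variable {n d : ℕ} {U : Set (Fin n → ℝ)} {V : Set (Fin d → ℝ)}

lemma TS_add {X Y : Matrix (Fin n) (Fin d) ℝ} {a b : ℝ≥0∞}
    (ha : a ∈ TS U V X) (hb : b ∈ TS U V Y) : a + b ∈ TS U V (X + Y) := by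
  obtain ⟨r₁, l₁, u₁, v₁, hl₁, hu₁, hv₁, hX, ht₁⟩ := ha
  obtain ⟨r₂, l₂, u₂, v₂, hl₂, hu₂, hv₂, hY, ht₂⟩ := hb
  refine ⟨r₁ + r₂, Fin.append l₁ l₂, Fin.append u₁ u₂, Fin.append v₁ v₂, ?_, ?_, ?_, ?_, ?_⟩
  · intro m
    refine Fin.addCases (fun i => ?_) (fun i => ?_) m <;>
      simp [Fin.append_left, Fin.append_right, hl₁ _, hl₂ _]
  · intro m
    refine Fin.addCases (fun i => ?_) (fun i => ?_) m <;>
      simp [Fin.append_left, Fin.append_right, hu₁ _, hu₂ _]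
  · intro m
    refine Fin.addCases (fun i => ?_) (fun i => ?_) m <;>
      simp [Fin.append_left, Fin.append_right, hv₁ _, hv₂ _]
  · rw [Fin.sum_univ_add]
    simp only [Fin.append_left, Fin.append_right]
    rw [hX, hY]
  · rw [Fin.sum_univ_add]
    simp only [Fin.append_left, Fin.append_right]
    rw [ht₁, ht₂, ← ENNReal.ofReal_add (Finset.sum_nonneg fun i _ => hl₁ i)
      (Finset.sum_nonneg fun i _ => hl₂ i)]

lemma TS_single {lam : ℝ} (hl : 0 ≤ lam) {p : Fin n → ℝ} {q : Fin d → ℝ}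
    (hp : p ∈ convexHull ℝ U) (hq : q ∈ convexHull ℝ V) :
    ENNReal.ofReal lam ∈ TS U V (lam • vecMulVec p q) := by
  rw [_root_.convexHull_eq] at hp hq
  obtain ⟨ι₁, t₁, w₁, z₁, hw₁, hs₁, hz₁, hc₁⟩ := hp
  obtain ⟨ι₂, t₂, w₂, z₂, hw₂, hs₂, hz₂, hc₂⟩ := hq
  rw [Finset.centerMass_eq_of_sum_1 _ _ hs₁] at hc₁
  rw [Finset.centerMass_eq_of_sum_1 _ _ hs₂] at hc₂
  set k₁ := t₁.card with hk₁
  set k₂ := t₂.card with hk₂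
  set e₁ := t₁.equivFin with he₁
  set e₂ := t₂.equivFin with he₂
  set W₁ : Fin k₁ → ℝ := fun j => w₁ (e₁.symm j) with hW₁
  set Z₁ : Fin k₁ → Fin n → ℝ := fun j => z₁ (e₁.symm j) with hZ₁
  set W₂ : Fin k₂ → ℝ := fun j => w₂ (e₂.symm j) with hW₂
  set Z₂ : Fin k₂ → Fin d → ℝ := fun j => z₂ (e₂.symm j) with hZ₂
  have hW₁0 : ∀ j, 0 ≤ W₁ j := fun j => hw₁ _ (e₁.symm j).2
  have hW₂0 : ∀ j, 0 ≤ W₂ j := fun j => hw₂ _ (e₂.symm j).2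
  have hZ₁U : ∀ j, Z₁ j ∈ U := fun j => hz₁ _ (e₁.symm j).2
  have hZ₂V : ∀ j, Z₂ j ∈ V := fun j => hz₂ _ (e₂.symm j).2
  have hW₁s : ∑ j, W₁ j = 1 := by
    rw [hW₁, Equiv.sum_comp e₁.symm (fun i => w₁ i), ← hs₁]
    exact Finset.sum_attach t₁ w₁
  have hW₂s : ∑ j, W₂ j = 1 := by
    rw [hW₂, Equiv.sum_comp e₂.symm (fun i => w₂ i), ← hs₂]
    exact Finset.sum_attach t₂ w₂
  have hZ₁p : ∑ j, W₁ j • Z₁ j = p := by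
    rw [hW₁, hZ₁]
    rw [Equiv.sum_comp e₁.symm (fun i : t₁ => w₁ i • z₁ i), ← hc₁]
    exact Finset.sum_attach t₁ fun i => w₁ i • z₁ i
  have hZ₂q : ∑ j, W₂ j • Z₂ j = q := by
    rw [hW₂, hZ₂]
    rw [Equiv.sum_comp e₂.symm (fun i : t₂ => w₂ i • z₂ i), ← hc₂]
    exact Finset.sum_attach t₂ fun i => w₂ i • z₂ i
  set eP : Fin k₁ × Fin k₂ ≃ Fin (k₁ * k₂) := finProdFinEquiv with heP
  refine ⟨k₁ * k₂, fun m => lam * W₁ (eP.symm m).1 * W₂ (eP.symm m).2,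
    fun m => Z₁ (eP.symm m).1, fun m => Z₂ (eP.symm m).2, ?_, ?_, ?_, ?_, ?_⟩
  · intro m
    exact mul_nonneg (mul_nonneg hl (hW₁0 _)) (hW₂0 _)
  · intro m; exact hZ₁U _
  · intro m; exact hZ₂V _
  · rw [← Equiv.sum_comp eP
      (fun m => (lam * W₁ (eP.symm m).1 * W₂ (eP.symm m).2) •
        vecMulVec (Z₁ (eP.symm m).1) (Z₂ (eP.symm m).2))]
    simp only [Equiv.symm_apply_apply]
    rw [Fintype.sum_prod_type]
    have h1 : ∀ i : Fin k₁, ∑ j : Fin k₂,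
        (lam * W₁ i * W₂ j) • vecMulVec (Z₁ i) (Z₂ j)
        = (lam * W₁ i) • vecMulVec (Z₁ i) q := by
      intro i
      rw [← hZ₂q, vmv_sum_right, Finset.smul_sum]
      apply Finset.sum_congr rfl
      intro j _
      rw [vmv_smul_right, smul_smul]
    rw [Finset.sum_congr rfl (fun i _ => h1 i)]
    have h2 : ∑ i : Fin k₁, (lam * W₁ i) • vecMulVec (Z₁ i) q
        = lam • vecMulVec p q := by
      rw [← hZ₁p, vmv_sum_left, Finset.smul_sum]
      apply Finset.sum_congr rfl
      intro i _
      rw [vmv_smul_left, smul_smul]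
    rw [h2]
  · congr 1
    rw [← Equiv.sum_comp eP (fun m => lam * W₁ (eP.symm m).1 * W₂ (eP.symm m).2)]
    simp only [Equiv.symm_apply_apply]
    rw [Fintype.sum_prod_type]
    have h3 : ∀ i : Fin k₁, ∑ j, lam * W₁ i * W₂ j = lam * W₁ i := by
      intro i; rw [← Finset.mul_sum, hW₂s, mul_one]
    rw [Finset.sum_congr rfl (fun i _ => h3 i), ← Finset.mul_sum, hW₁s, mul_one]

lemma TS_hull_mem : ∀ (r : ℕ) (lam : Fin r → ℝ) (u : Fin r → Fin n → ℝ)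
    (v : Fin r → Fin d → ℝ), (∀ m, 0 ≤ lam m) → (∀ m, u m ∈ convexHull ℝ U) →
    (∀ m, v m ∈ convexHull ℝ V) →
    ENNReal.ofReal (∑ m, lam m) ∈ TS U V (∑ m, lam m • vecMulVec (u m) (v m)) := by
  intro r
  induction r with
  | zero =>
    intro lam u v _ _ _
    simp only [Finset.univ_eq_empty, Finset.sum_empty, ENNReal.ofReal_zero]
    exact ⟨0, Fin.elim0, Fin.elim0, Fin.elim0, fun m => m.elim0, fun m => m.elim0,
      fun m => m.elim0, by simp, by simp⟩
  | succ r ih =>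
    intro lam u v hl hu hv
    rw [Fin.sum_univ_castSucc (f := fun m => lam m • vecMulVec (u m) (v m)),
      Fin.sum_univ_castSucc (f := lam),
      ENNReal.ofReal_add (Finset.sum_nonneg fun i _ => hl _) (hl _)]
    exact TS_add (ih _ _ _ (fun m => hl _) (fun m => hu _) (fun m => hv _))
      (TS_single (hl _) (hu _) (hv _))

lemma theta_le_decomp {r : ℕ} (a b : Fin r → ℝ) (p : Fin r → Fin n → ℝ)
    (q : Fin r → Fin d → ℝ) (ha : ∀ m, 0 ≤ a m) (hb : ∀ m, 0 ≤ b m)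
    (hp : ∀ m, p m ∈ convexHull ℝ U) (hq : ∀ m, q m ∈ convexHull ℝ V)
    {X : Matrix (Fin n) (Fin d) ℝ}
    (hX : X = ∑ m, vecMulVec (a m • p m) (b m • q m)) :
    sInf (TS U V X) ≤ ENNReal.ofReal (∑ m, a m * b m) := by
  apply sInf_le
  have h1 : X = ∑ m, (a m * b m) • vecMulVec (p m) (q m) := by
    rw [hX]
    apply Finset.sum_congr rfl
    intro m _
    rw [vmv_smul_left, vmv_smul_right, smul_smul]
  rw [h1]
  exact TS_hull_mem r _ p q (fun m => mul_nonneg (ha m) (hb m)) hp hq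

end Statement6Aux

open Statement6Aux

/-- For compact `U ⊂ ℝ^n`, `V ⊂ ℝ^d` containing `0` in their convex hulls, `Θ(X)` equals each
of the four infima over finite decompositions `X = Σ u_m v_mᵀ`:
(i) of `(1/2) Σ (γ_U(u_m)² + γ_V(v_m)²)`; (ii) of `Σ γ_U(u_m) γ_V(v_m)`;
(iii) with `u_m ∈ U`, of `Σ γ_V(v_m)`; (iv) with `v_m ∈ V`, of `Σ γ_U(u_m)`. -/
theorem statement6 {n d : ℕ} (U : Set (Fin n → ℝ)) (V : Set (Fin d → ℝ))
    (hU : IsCompact U) (hV : IsCompact V)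
    (hU0 : (0 : Fin n → ℝ) ∈ convexHull ℝ U) (hV0 : (0 : Fin d → ℝ) ∈ convexHull ℝ V)
    (X : Matrix (Fin n) (Fin d) ℝ) :
    Theta U V X =
      sInf {t : ℝ≥0∞ | ∃ (r : ℕ) (u : Fin r → Fin n → ℝ) (v : Fin r → Fin d → ℝ),
        X = ∑ m, vecMulVec (u m) (v m) ∧
        t = (∑ m, ((gaugeE U (u m)) ^ 2 + (gaugeE V (v m)) ^ 2)) / 2} ∧
    Theta U V X =
      sInf {t : ℝ≥0∞ | ∃ (r : ℕ) (u : Fin r → Fin n → ℝ) (v : Fin r → Fin d → ℝ),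
        X = ∑ m, vecMulVec (u m) (v m) ∧
        t = ∑ m, gaugeE U (u m) * gaugeE V (v m)} ∧
    Theta U V X =
      sInf {t : ℝ≥0∞ | ∃ (r : ℕ) (u : Fin r → Fin n → ℝ) (v : Fin r → Fin d → ℝ),
        (∀ m, u m ∈ U) ∧ X = ∑ m, vecMulVec (u m) (v m) ∧
        t = ∑ m, gaugeE V (v m)} ∧
    Theta U V X =
      sInf {t : ℝ≥0∞ | ∃ (r : ℕ) (u : Fin r → Fin n → ℝ) (v : Fin r → Fin d → ℝ),
        (∀ m, v m ∈ V) ∧ X = ∑ m, vecMulVec (u m) (v m) ∧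
        t = ∑ m, gaugeE U (u m)} := by
  have hcU := cvx_eq hU hU0
  have hcV := cvx_eq hV hV0
  rw [Theta_eq_sInf_TS]
  have key3 : sInf (TS U V X) =
      sInf {t : ℝ≥0∞ | ∃ (r : ℕ) (u : Fin r → Fin n → ℝ) (v : Fin r → Fin d → ℝ),
        (∀ m, u m ∈ U) ∧ X = ∑ m, vecMulVec (u m) (v m) ∧
        t = ∑ m, gaugeE V (v m)} := by
    apply le_antisymm
    · apply le_sInf
      rintro t ⟨r, u, v, huU, hX, rfl⟩
      by_cases htop : (∑ m, gaugeE V (v m)) = ⊤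
      · rw [htop]; exact le_top
      have hfin : ∀ m, gaugeE V (v m) ≠ ⊤ := fun m hm =>
        htop (ENNReal.sum_eq_top.2 ⟨m, Finset.mem_univ m, hm⟩)
      choose b q hb hgb hq hvb using fun m => gaugeE_exists hV hV0 (hfin m)
      have hX' : X = ∑ m, vecMulVec ((1:ℝ) • u m) (b m • q m) := by
        rw [hX]
        exact Finset.sum_congr rfl fun m _ => by rw [one_smul, ← hvb m]
      refine le_trans (theta_le_decomp (fun _ => (1:ℝ)) b (fun m => u m) q
        (fun _ => zero_le_one) hb (fun m => subset_convexHull ℝ U (huU m)) hq hX') ?_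
      rw [ENNReal.ofReal_sum_of_nonneg (fun m _ => mul_nonneg zero_le_one (hb m))]
      apply le_of_eq
      exact Finset.sum_congr rfl fun m _ => by rw [one_mul, ← hgb m]
    · apply le_sInf
      rintro s ⟨r, lam, u, v, hl, huU, hvV, hX, rfl⟩
      have hX' : X = ∑ m, vecMulVec (u m) (lam m • v m) := by
        rw [hX]
        exact Finset.sum_congr rfl fun m _ => (vmv_smul_right _ _ _).symm
      refine le_trans (sInf_le ⟨r, u, fun m => lam m • v m, huU, hX', rfl⟩) ?_
      calc ∑ m, gaugeE V (lam m • v m)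
          ≤ ∑ m, ENNReal.ofReal (lam m) := Finset.sum_le_sum fun m _ =>
            gaugeE_le_ofReal (hl m) (smul_mem_smul_set (mem_cvx (hvV m)))
        _ = ENNReal.ofReal (∑ m, lam m) :=
            (ENNReal.ofReal_sum_of_nonneg fun m _ => hl m).symm
  have key4 : sInf (TS U V X) =
      sInf {t : ℝ≥0∞ | ∃ (r : ℕ) (u : Fin r → Fin n → ℝ) (v : Fin r → Fin d → ℝ),
        (∀ m, v m ∈ V) ∧ X = ∑ m, vecMulVec (u m) (v m) ∧
        t = ∑ m, gaugeE U (u m)} := by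
    apply le_antisymm
    · apply le_sInf
      rintro t ⟨r, u, v, hvV, hX, rfl⟩
      by_cases htop : (∑ m, gaugeE U (u m)) = ⊤
      · rw [htop]; exact le_top
      have hfin : ∀ m, gaugeE U (u m) ≠ ⊤ := fun m hm =>
        htop (ENNReal.sum_eq_top.2 ⟨m, Finset.mem_univ m, hm⟩)
      choose a p ha hga hp hua using fun m => gaugeE_exists hU hU0 (hfin m)
      have hX' : X = ∑ m, vecMulVec (a m • p m) ((1:ℝ) • v m) := by
        rw [hX]
        exact Finset.sum_congr rfl fun m _ => by rw [one_smul, ← hua m]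
      refine le_trans (theta_le_decomp a (fun _ => (1:ℝ)) p (fun m => v m)
        ha (fun _ => zero_le_one) hp (fun m => subset_convexHull ℝ V (hvV m)) hX') ?_
      rw [ENNReal.ofReal_sum_of_nonneg (fun m _ => mul_nonneg (ha m) zero_le_one)]
      apply le_of_eq
      exact Finset.sum_congr rfl fun m _ => by rw [mul_one, ← hga m]
    · apply le_sInf
      rintro s ⟨r, lam, u, v, hl, huU, hvV, hX, rfl⟩
      have hX' : X = ∑ m, vecMulVec (lam m • u m) (v m) := by
        rw [hX]
        exact Finset.sum_congr rfl fun m _ => (vmv_smul_left _ _ _).symm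
      refine le_trans (sInf_le ⟨r, fun m => lam m • u m, v, hvV, hX', rfl⟩) ?_
      calc ∑ m, gaugeE U (lam m • u m)
          ≤ ∑ m, ENNReal.ofReal (lam m) := Finset.sum_le_sum fun m _ =>
            gaugeE_le_ofReal (hl m) (smul_mem_smul_set (mem_cvx (huU m)))
        _ = ENNReal.ofReal (∑ m, lam m) :=
            (ENNReal.ofReal_sum_of_nonneg fun m _ => hl m).symm
  have key2 : sInf (TS U V X) =
      sInf {t : ℝ≥0∞ | ∃ (r : ℕ) (u : Fin r → Fin n → ℝ) (v : Fin r → Fin d → ℝ),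
        X = ∑ m, vecMulVec (u m) (v m) ∧
        t = ∑ m, gaugeE U (u m) * gaugeE V (v m)} := by
    apply le_antisymm
    · apply le_sInf
      rintro t ⟨r, u, v, hX, rfl⟩
      by_cases htop : (∑ m, gaugeE U (u m) * gaugeE V (v m)) = ⊤
      · rw [htop]; exact le_top
      have hfin : ∀ m, gaugeE U (u m) * gaugeE V (v m) ≠ ⊤ := fun m hm =>
        htop (ENNReal.sum_eq_top.2 ⟨m, Finset.mem_univ m, hm⟩)
      have hch : ∀ m, ∃ (a b : ℝ) (p : Fin n → ℝ) (q : Fin d → ℝ), 0 ≤ a ∧ 0 ≤ b ∧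
          p ∈ convexHull ℝ U ∧ q ∈ convexHull ℝ V ∧
          vecMulVec (u m) (v m) = vecMulVec (a • p) (b • q) ∧
          ENNReal.ofReal (a * b) = gaugeE U (u m) * gaugeE V (v m) := by
        intro m
        by_cases hu' : gaugeE U (u m) = ⊤
        · have hv0 : gaugeE V (v m) = 0 := by
            by_contra h
            exact hfin m (by rw [hu', ENNReal.top_mul h])
          obtain ⟨b, q, hb, hgb, hq, hvb⟩ := gaugeE_exists hV hV0
            (by rw [hv0]; exact ENNReal.zero_ne_top)
          have hb0 : b = 0 := le_antisymm (ENNReal.ofReal_eq_zero.1 (hgb.symm.trans hv0)) hb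
          have hv0' : v m = 0 := by rw [hvb, hb0, zero_smul]
          refine ⟨0, 0, 0, 0, le_rfl, le_rfl, hU0, hV0, ?_, ?_⟩
          · rw [hv0', vmv_zero_right, zero_smul, vmv_zero_left]
          · rw [mul_zero, ENNReal.ofReal_zero, hu', hv0, mul_zero]
        · by_cases hv' : gaugeE V (v m) = ⊤
          · have hu0 : gaugeE U (u m) = 0 := by
              by_contra h
              exact hfin m (by rw [hv', ENNReal.mul_top h])
            obtain ⟨a, p, ha, hga, hp, hua⟩ := gaugeE_exists hU hU0
              (by rw [hu0]; exact ENNReal.zero_ne_top)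
            have ha0 : a = 0 := le_antisymm (ENNReal.ofReal_eq_zero.1 (hga.symm.trans hu0)) ha
            have hu0' : u m = 0 := by rw [hua, ha0, zero_smul]
            refine ⟨0, 0, 0, 0, le_rfl, le_rfl, hU0, hV0, ?_, ?_⟩
            · rw [hu0', vmv_zero_left, zero_smul, vmv_zero_left]
            · rw [zero_mul, ENNReal.ofReal_zero, hu0, zero_mul]
          · obtain ⟨a, p, ha, hga, hp, hua⟩ := gaugeE_exists hU hU0 hu'
            obtain ⟨b, q, hb, hgb, hq, hvb⟩ := gaugeE_exists hV hV0 hv'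
            refine ⟨a, b, p, q, ha, hb, hp, hq, ?_, ?_⟩
            · rw [← hua, ← hvb]
            · rw [ENNReal.ofReal_mul ha, ← hga, ← hgb]
      choose a b p q ha hb hp hq hmv hval using hch
      have hX' : X = ∑ m, vecMulVec (a m • p m) (b m • q m) := by
        rw [hX]
        exact Finset.sum_congr rfl fun m _ => hmv m
      refine le_trans (theta_le_decomp a b p q ha hb hp hq hX') ?_
      rw [ENNReal.ofReal_sum_of_nonneg (fun m _ => mul_nonneg (ha m) (hb m))]
      exact le_of_eq (Finset.sum_congr rfl fun m _ => hval m)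
    · apply le_sInf
      rintro s ⟨r, lam, u, v, hl, huU, hvV, hX, rfl⟩
      have hX' : X = ∑ m, vecMulVec (lam m • u m) (v m) := by
        rw [hX]
        exact Finset.sum_congr rfl fun m _ => (vmv_smul_left _ _ _).symm
      refine le_trans (sInf_le ⟨r, fun m => lam m • u m, v, hX', rfl⟩) ?_
      calc ∑ m, gaugeE U (lam m • u m) * gaugeE V (v m)
          ≤ ∑ m, ENNReal.ofReal (lam m) * 1 := Finset.sum_le_sum fun m _ =>
            mul_le_mul' (gaugeE_le_ofReal (hl m) (smul_mem_smul_set (mem_cvx (huU m))))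
              (gaugeE_le_one (mem_cvx (hvV m)))
        _ = ∑ m, ENNReal.ofReal (lam m) := by simp
        _ = ENNReal.ofReal (∑ m, lam m) :=
            (ENNReal.ofReal_sum_of_nonneg fun m _ => hl m).symm
  have key1 : sInf (TS U V X) =
      sInf {t : ℝ≥0∞ | ∃ (r : ℕ) (u : Fin r → Fin n → ℝ) (v : Fin r → Fin d → ℝ),
        X = ∑ m, vecMulVec (u m) (v m) ∧
        t = (∑ m, ((gaugeE U (u m)) ^ 2 + (gaugeE V (v m)) ^ 2)) / 2} := by
    apply le_antisymm
    · apply le_sInf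
      rintro t ⟨r, u, v, hX, rfl⟩
      by_cases htop : (∑ m, ((gaugeE U (u m)) ^ 2 + (gaugeE V (v m)) ^ 2)) = ⊤
      · rw [htop, ENNReal.top_div_of_ne_top (by norm_num : (2:ℝ≥0∞) ≠ ⊤)]
        exact le_top
      have hfin : ∀ m, (gaugeE U (u m)) ^ 2 + (gaugeE V (v m)) ^ 2 ≠ ⊤ := fun m hm =>
        htop (ENNReal.sum_eq_top.2 ⟨m, Finset.mem_univ m, hm⟩)
      have hfinU : ∀ m, gaugeE U (u m) ≠ ⊤ := fun m hm =>
        (ENNReal.add_ne_top.1 (hfin m)).1 (by rw [hm]; exact ENNReal.top_pow (by norm_num))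
      have hfinV : ∀ m, gaugeE V (v m) ≠ ⊤ := fun m hm =>
        (ENNReal.add_ne_top.1 (hfin m)).2 (by rw [hm]; exact ENNReal.top_pow (by norm_num))
      choose a p ha hga hp hua using fun m => gaugeE_exists hU hU0 (hfinU m)
      choose b q hb hgb hq hvb using fun m => gaugeE_exists hV hV0 (hfinV m)
      have hX' : X = ∑ m, vecMulVec (a m • p m) (b m • q m) := by
        rw [hX]
        exact Finset.sum_congr rfl fun m _ => by rw [← hua m, ← hvb m]
      refine le_trans (theta_le_decomp a b p q ha hb hp hq hX') ?_
      have heq : (∑ m, ((gaugeE U (u m)) ^ 2 + (gaugeE V (v m)) ^ 2)) / 2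
          = ENNReal.ofReal ((∑ m, ((a m) ^ 2 + (b m) ^ 2)) / 2) := by
        have h1 : ∀ m, (gaugeE U (u m)) ^ 2 + (gaugeE V (v m)) ^ 2
            = ENNReal.ofReal ((a m) ^ 2 + (b m) ^ 2) := by
          intro m
          rw [hga m, hgb m, ← ENNReal.ofReal_pow (ha m), ← ENNReal.ofReal_pow (hb m),
            ENNReal.ofReal_add (pow_nonneg (ha m) 2) (pow_nonneg (hb m) 2)]
        rw [Finset.sum_congr rfl fun m _ => h1 m,
          ← ENNReal.ofReal_sum_of_nonneg (fun m _ =>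
            add_nonneg (pow_nonneg (ha m) 2) (pow_nonneg (hb m) 2)),
          ENNReal.ofReal_div_of_pos two_pos, ENNReal.ofReal_ofNat]
      rw [heq]
      apply ENNReal.ofReal_le_ofReal
      rw [Finset.sum_div]
      apply Finset.sum_le_sum
      intro m _
      have := two_mul_le_add_sq (a m) (b m)
      linarith
    · apply le_sInf
      rintro s ⟨r, lam, u, v, hl, huU, hvV, hX, rfl⟩
      have hX' : X = ∑ m, vecMulVec (Real.sqrt (lam m) • u m) (Real.sqrt (lam m) • v m) := by
        rw [hX]
        apply Finset.sum_congr rfl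
        intro m _
        rw [vmv_smul_left, vmv_smul_right, smul_smul, Real.mul_self_sqrt (hl m)]
      refine le_trans (sInf_le ⟨r, fun m => Real.sqrt (lam m) • u m,
        fun m => Real.sqrt (lam m) • v m, hX', rfl⟩) ?_
      have hbound : ∀ m, (gaugeE U (Real.sqrt (lam m) • u m)) ^ 2
          + (gaugeE V (Real.sqrt (lam m) • v m)) ^ 2
          ≤ 2 * ENNReal.ofReal (lam m) := by
        intro m
        have h1 : gaugeE U (Real.sqrt (lam m) • u m) ≤ ENNReal.ofReal (Real.sqrt (lam m)) :=
          gaugeE_le_ofReal (Real.sqrt_nonneg _) (smul_mem_smul_set (mem_cvx (huU m)))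
        have h2 : gaugeE V (Real.sqrt (lam m) • v m) ≤ ENNReal.ofReal (Real.sqrt (lam m)) :=
          gaugeE_le_ofReal (Real.sqrt_nonneg _) (smul_mem_smul_set (mem_cvx (hvV m)))
        have h3 : (ENNReal.ofReal (Real.sqrt (lam m))) ^ 2 = ENNReal.ofReal (lam m) := by
          rw [← ENNReal.ofReal_pow (Real.sqrt_nonneg _), Real.sq_sqrt (hl m)]
        calc (gaugeE U (Real.sqrt (lam m) • u m)) ^ 2
            + (gaugeE V (Real.sqrt (lam m) • v m)) ^ 2
            ≤ (ENNReal.ofReal (Real.sqrt (lam m))) ^ 2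
              + (ENNReal.ofReal (Real.sqrt (lam m))) ^ 2 :=
              add_le_add (pow_le_pow_left' h1 2) (pow_le_pow_left' h2 2)
          _ = 2 * ENNReal.ofReal (lam m) := by rw [h3, two_mul]
      calc (∑ m, ((gaugeE U (Real.sqrt (lam m) • u m)) ^ 2
            + (gaugeE V (Real.sqrt (lam m) • v m)) ^ 2)) / 2
          ≤ (∑ m, 2 * ENNReal.ofReal (lam m)) / 2 :=
            ENNReal.div_le_div_right (Finset.sum_le_sum fun m _ => hbound m) 2
        _ = (2 * ENNReal.ofReal (∑ m, lam m)) / 2 := by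
            rw [← Finset.mul_sum, ENNReal.ofReal_sum_of_nonneg fun m _ => hl m]
        _ = ENNReal.ofReal (∑ m, lam m) := by
            rw [mul_comm, mul_div_assoc, ENNReal.div_self (by norm_num) (by norm_num), mul_one]
  exact ⟨key1, key2, key3, key4⟩

end
end

section
/- Let U ⊂ ℝ^n and V ⊂ ℝ^d be compact sets each containing 0 in its convex hull, and let Θ be the gauge function on ℝ^{n×d} of {u vᵀ : u ∈ U, v ∈ V}. Then the polar gauge of Θ satisfies, for every Y ∈ ℝ^{n×d}: Θ°(Y) = max_{u ∈ U, v ∈ V} uᵀ Y v = max_{u ∈ U} γ_V°(Yᵀ u) = max_{v ∈ V} γ_U°(Y v) = max over {u : γ_U(u) ≤ 1} and {v : γ_V(v) ≤ 1} of uᵀ Y v. -/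
open Matrix Set ENNReal NNReal Pointwise Filter

noncomputable section

/-- One-sided polar of a set of vectors. -/
def vpolar {d : ℕ} (C : Set (Fin d → ℝ)) : Set (Fin d → ℝ) :=
  {y | ∀ x ∈ C, x ⬝ᵥ y ≤ 1}

/-- One-sided polar of a set of rectangular matrices, with pairing `⟨X, Y⟩ = tr(Xᵀ Y)`. -/
def matPolar {n d : ℕ} (C : Set (Matrix (Fin n) (Fin d) ℝ)) :
    Set (Matrix (Fin n) (Fin d) ℝ) :=
  {Y | ∀ X ∈ C, (Xᵀ * Y).trace ≤ 1}

/-- The set `{u vᵀ : u ∈ U, v ∈ V}`. -/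
def dyads {n d : ℕ} (U : Set (Fin n → ℝ)) (V : Set (Fin d → ℝ)) :
    Set (Matrix (Fin n) (Fin d) ℝ) :=
  {M | ∃ u ∈ U, ∃ v ∈ V, M = vecMulVec u v}

/-- The gauge of a "polar-type" set cut out by linear inequalities equals the sup
of the corresponding linear functionals. -/
lemma gaugeE_polar_eq {E ι : Type*} [AddCommGroup E] [Module ℝ E] [TopologicalSpace E]
    (A : Set ι) (φ : ι → E → ℝ) (hlin : ∀ a, IsLinearMap ℝ (φ a))
    (hcont : ∀ a, Continuous (φ a)) (x : E) :
    gaugeE {y : E | ∀ a ∈ A, φ a y ≤ 1} x = ⨆ a ∈ A, ENNReal.ofReal (φ a x) := by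
  set P := {y : E | ∀ a ∈ A, φ a y ≤ 1} with hPdef
  have hPi : P = ⋂ a, ⋂ (_ : a ∈ A), {y : E | φ a y ≤ 1} := by
    ext y; simp [hPdef]
  have hconv : Convex ℝ P := by
    rw [hPi]
    exact convex_iInter fun a => convex_iInter fun _ => convex_halfSpace_le (hlin a) 1
  have hclosed : IsClosed P := by
    rw [hPi]
    exact isClosed_iInter fun a => isClosed_iInter fun _ =>
      isClosed_le (hcont a) continuous_const
  have h0 : (0 : E) ∈ P := by
    intro a ha
    rw [(hlin a).map_zero]
    norm_num
  have hPeq : cvx P = P := by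
    rw [cvx, insert_eq_self.2 h0, hconv.convexHull_eq, hclosed.closure_eq]
  simp only [gaugeE, hPeq]
  apply le_antisymm
  · set S := ⨆ a ∈ A, ENNReal.ofReal (φ a x) with hS
    rcases eq_or_ne S ⊤ with h | h
    · rw [h]; exact le_top
    · apply ENNReal.le_of_forall_pos_le_add
      intro ε hε _
      have hr0' : (0 : ℝ≥0) < S.toNNReal + ε := add_pos_of_nonneg_of_pos zero_le hε
      have hr0 : (0 : ℝ) < ((S.toNNReal + ε : ℝ≥0) : ℝ) := by exact_mod_cast hr0'
      refine le_trans (iInf₂_le (S.toNNReal + ε) ?_) ?_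
      · rw [mem_smul_set_iff_inv_smul_mem₀ (ne_of_gt hr0)]
        intro a ha
        have h1 : φ a x ≤ S.toReal := by
          have h2 : ENNReal.ofReal (φ a x) ≤ S :=
            le_iSup₂ (f := fun a (_ : a ∈ A) => ENNReal.ofReal (φ a x)) a ha
          exact (ENNReal.ofReal_le_iff_le_toReal h).1 h2
        have h3 : S.toReal ≤ ((S.toNNReal + ε : ℝ≥0) : ℝ) := by
          push_cast
          have : S.toReal = (S.toNNReal : ℝ) := rfl
          rw [this]
          linarith [ε.coe_nonneg]
        rw [(hlin a).map_smul, smul_eq_mul, inv_mul_le_iff₀ hr0, mul_one]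
        linarith
      · rw [ENNReal.coe_add, ENNReal.coe_toNNReal h]
  · refine le_iInf fun r => le_iInf fun hmem => iSup₂_le fun a ha => ?_
    obtain ⟨y, hy, rfl⟩ := hmem
    rw [(hlin a).map_smul, smul_eq_mul]
    calc ENNReal.ofReal ((r : ℝ) * φ a y)
        ≤ ENNReal.ofReal ((r : ℝ) * 1) :=
          ENNReal.ofReal_le_ofReal (mul_le_mul_of_nonneg_left (hy a ha) r.coe_nonneg)
      _ = (r : ℝ≥0∞) := by rw [mul_one, ENNReal.ofReal_coe_nnreal]

lemma dot_linear {k : ℕ} (c : Fin k → ℝ) : IsLinearMap ℝ (fun y : Fin k → ℝ => c ⬝ᵥ y) := by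
  constructor
  · intro y z; exact dotProduct_add c y z
  · intro r y; simp [dotProduct, Finset.mul_sum, mul_left_comm]

lemma dot_continuous {k : ℕ} (c : Fin k → ℝ) :
    Continuous (fun y : Fin k → ℝ => c ⬝ᵥ y) := by
  simp only [dotProduct]
  exact continuous_finset_sum _ fun i _ => (continuous_const.mul (continuous_apply i))

lemma gaugeE_vpolar {k : ℕ} (A : Set (Fin k → ℝ)) (w : Fin k → ℝ) :
    gaugeE (vpolar A) w = ⨆ a ∈ A, ENNReal.ofReal (a ⬝ᵥ w) :=
  gaugeE_polar_eq A (fun a y => a ⬝ᵥ y) (fun a => dot_linear a) (fun a => dot_continuous a) w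

lemma trace_pairing_linear {n d : ℕ} (X : Matrix (Fin n) (Fin d) ℝ) :
    IsLinearMap ℝ (fun Y : Matrix (Fin n) (Fin d) ℝ => (Xᵀ * Y).trace) := by
  constructor
  · intro Y Z; rw [Matrix.mul_add, Matrix.trace_add]
  · intro r Y; rw [Matrix.mul_smul, Matrix.trace_smul]

lemma trace_pairing_continuous {n d : ℕ} (X : Matrix (Fin n) (Fin d) ℝ) :
    Continuous (fun Y : Matrix (Fin n) (Fin d) ℝ => (Xᵀ * Y).trace) :=
  (continuous_const.matrix_mul continuous_id).matrix_trace

lemma trace_vecMulVec {n d : ℕ} (u : Fin n → ℝ) (v : Fin d → ℝ)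
    (Y : Matrix (Fin n) (Fin d) ℝ) :
    ((vecMulVec u v)ᵀ * Y).trace = u ⬝ᵥ Y.mulVec v := by
  simp only [Matrix.trace, Matrix.diag, Matrix.mul_apply, Matrix.transpose_apply,
    Matrix.vecMulVec_apply, Matrix.mulVec, dotProduct, Finset.mul_sum]
  rw [Finset.sum_comm]
  exact Finset.sum_congr rfl fun j _ => Finset.sum_congr rfl fun i _ => by ring

lemma iSup_dyads {n d : ℕ} (U : Set (Fin n → ℝ)) (V : Set (Fin d → ℝ))
    (f : Matrix (Fin n) (Fin d) ℝ → ℝ≥0∞) :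
    ⨆ X ∈ dyads U V, f X = ⨆ u ∈ U, ⨆ v ∈ V, f (vecMulVec u v) := by
  apply le_antisymm
  · refine iSup₂_le fun X hX => ?_
    obtain ⟨u, hu, v, hv, rfl⟩ := hX
    exact le_iSup₂_of_le u hu (le_iSup₂_of_le v hv le_rfl)
  · exact iSup₂_le fun u hu => iSup₂_le fun v hv =>
      le_iSup₂_of_le (vecMulVec u v) ⟨u, hu, v, hv, rfl⟩ le_rfl

lemma gaugeE_le_one_of_mem {E : Type*} [AddCommGroup E] [Module ℝ E] [TopologicalSpace E]
    {A : Set E} {u : E} (hu : u ∈ A) : gaugeE A u ≤ 1 := by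
  have h1 : u ∈ ((1 : ℝ≥0) : ℝ) • cvx A :=
    Set.mem_smul_set.2 ⟨u, subset_closure (subset_convexHull ℝ _ (mem_insert_of_mem _ hu)),
      by norm_num⟩
  calc gaugeE A u ≤ ((1 : ℝ≥0) : ℝ≥0∞) := iInf₂_le (1 : ℝ≥0) h1
    _ = 1 := by norm_num

lemma mem_cvx_of_gaugeE_le_one {k : ℕ} (A : Set (Fin k → ℝ)) (x : Fin k → ℝ)
    (h : gaugeE A x ≤ 1) : x ∈ cvx A := by
  have hclosed : IsClosed (cvx A) := isClosed_closure
  have hconv : Convex ℝ (cvx A) := (convex_convexHull ℝ _).closure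
  have h0 : (0 : Fin k → ℝ) ∈ cvx A :=
    subset_closure (subset_convexHull ℝ _ (mem_insert _ _))
  have key : ∀ s : ℝ, 1 < s → s⁻¹ • x ∈ cvx A := by
    intro s hs
    have hs0 : (0 : ℝ) < s := lt_trans one_pos hs
    have hlt : gaugeE A x < (s.toNNReal : ℝ≥0∞) := by
      refine lt_of_le_of_lt h ?_
      rw [show (1 : ℝ≥0∞) = ((1 : ℝ≥0) : ℝ≥0∞) from rfl, ENNReal.coe_lt_coe,
        ← Real.toNNReal_one]
      exact (Real.toNNReal_lt_toNNReal_iff hs0).2 hs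
    rw [gaugeE] at hlt
    obtain ⟨r, hr⟩ := iInf_lt_iff.1 hlt
    obtain ⟨hmem, hr'⟩ := iInf_lt_iff.1 hr
    have hrs : (r : ℝ) < s := by
      rw [ENNReal.coe_lt_coe] at hr'
      calc (r : ℝ) < (s.toNNReal : ℝ) := by exact_mod_cast hr'
        _ = s := Real.coe_toNNReal s hs0.le
    obtain ⟨y, hy, rfl⟩ := hmem
    rw [smul_smul]
    refine hconv.smul_mem_of_zero_mem h0 hy ⟨by positivity, ?_⟩
    rw [inv_mul_le_iff₀ hs0, mul_one]
    exact hrs.le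
  have htend : Tendsto (fun m : ℕ => ((1 + 1 / ((m : ℝ) + 1))⁻¹) • x) atTop (nhds x) := by
    have h1 : Tendsto (fun m : ℕ => 1 + 1 / ((m : ℝ) + 1)) atTop (nhds 1) := by
      have h0 : Tendsto (fun n : ℕ => 1 / ((n : ℝ) + 1)) atTop (nhds 0) :=
        tendsto_one_div_add_atTop_nhds_zero_nat
      have h2 := Filter.Tendsto.add
        (tendsto_const_nhds : Tendsto (fun _ : ℕ => (1 : ℝ)) atTop (nhds 1)) h0
      simpa using h2
    have h2 := (h1.inv₀ one_ne_zero).smul (tendsto_const_nhds (x := x))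
    simpa using h2
  refine hclosed.mem_of_tendsto htend (Filter.Eventually.of_forall fun m => key _ ?_)
  have : (0 : ℝ) < 1 / ((m : ℝ) + 1) := by positivity
  linarith

lemma ofReal_le_biSup_of_mem_cvx {k : ℕ} (A : Set (Fin k → ℝ)) (f : (Fin k → ℝ) → ℝ)
    (hlin : IsLinearMap ℝ f) (hcont : Continuous f) {x : Fin k → ℝ} (hx : x ∈ cvx A) :
    ENNReal.ofReal (f x) ≤ ⨆ a ∈ A, ENNReal.ofReal (f a) := by
  set S := ⨆ a ∈ A, ENNReal.ofReal (f a) with hS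
  rcases eq_or_ne S ⊤ with h | h
  · rw [h]; exact le_top
  · have hD : cvx A ⊆ {y | f y ≤ S.toReal} := by
      refine closure_minimal (convexHull_min ?_ (convex_halfSpace_le hlin _))
        (isClosed_le hcont continuous_const)
      rintro y hy
      rcases mem_insert_iff.1 hy with rfl | hy
      · rw [Set.mem_setOf_eq, hlin.map_zero]
        exact ENNReal.toReal_nonneg
      · exact (ENNReal.ofReal_le_iff_le_toReal h).1
          (le_iSup₂ (f := fun a (_ : a ∈ A) => ENNReal.ofReal (f a)) y hy)
    calc ENNReal.ofReal (f x) ≤ ENNReal.ofReal S.toReal :=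
          ENNReal.ofReal_le_ofReal (hD hx)
      _ = S := ENNReal.ofReal_toReal h

/-- For compact `U`, `V` containing `0` in their convex hulls, the polar gauge `Θ°` of the
gauge `Θ` of `{u vᵀ : u ∈ U, v ∈ V}` satisfies
`Θ°(Y) = max_{u ∈ U, v ∈ V} uᵀ Y v = max_{u ∈ U} γ_V°(Yᵀ u) = max_{v ∈ V} γ_U°(Y v)
       = max_{γ_U(u) ≤ 1, γ_V(v) ≤ 1} uᵀ Y v`. -/
theorem statement7 {n d : ℕ} (U : Set (Fin n → ℝ)) (V : Set (Fin d → ℝ))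
    (hU : IsCompact U) (hV : IsCompact V)
    (hU0 : (0 : Fin n → ℝ) ∈ convexHull ℝ U) (hV0 : (0 : Fin d → ℝ) ∈ convexHull ℝ V)
    (Y : Matrix (Fin n) (Fin d) ℝ) :
    (gaugeE (matPolar (dyads U V)) Y
        = ⨆ u ∈ U, ⨆ v ∈ V, ENNReal.ofReal (u ⬝ᵥ Y.mulVec v)) ∧
    (gaugeE (matPolar (dyads U V)) Y = ⨆ u ∈ U, gaugeE (vpolar V) (Yᵀ.mulVec u)) ∧
    (gaugeE (matPolar (dyads U V)) Y = ⨆ v ∈ V, gaugeE (vpolar U) (Y.mulVec v)) ∧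
    (gaugeE (matPolar (dyads U V)) Y
        = ⨆ u ∈ {u | gaugeE U u ≤ 1}, ⨆ v ∈ {v | gaugeE V v ≤ 1},
            ENNReal.ofReal (u ⬝ᵥ Y.mulVec v)) := by
  have hdot : ∀ (u : Fin n → ℝ) (v : Fin d → ℝ), v ⬝ᵥ Yᵀ.mulVec u = u ⬝ᵥ Y.mulVec v := by
    intro u v
    rw [Matrix.dotProduct_mulVec, Matrix.vecMul_transpose, dotProduct_comm]
  have h1 : gaugeE (matPolar (dyads U V)) Y
      = ⨆ u ∈ U, ⨆ v ∈ V, ENNReal.ofReal (u ⬝ᵥ Y.mulVec v) := by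
    have := gaugeE_polar_eq (dyads U V)
      (fun X Z => (Xᵀ * Z).trace) trace_pairing_linear trace_pairing_continuous Y
    rw [show matPolar (dyads U V) = {Z | ∀ X ∈ dyads U V, (Xᵀ * Z).trace ≤ 1} from rfl, this,
      iSup_dyads U V (fun X => ENNReal.ofReal ((Xᵀ * Y).trace))]
    simp only [trace_vecMulVec]
  refine ⟨h1, ?_, ?_, ?_⟩
  · rw [h1]
    refine iSup_congr fun u => iSup_congr fun _ => ?_
    rw [gaugeE_vpolar]
    simp only [hdot]
  · rw [h1]
    have h3 : ∀ v, gaugeE (vpolar U) (Y.mulVec v)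
        = ⨆ u ∈ U, ENNReal.ofReal (u ⬝ᵥ Y.mulVec v) := fun v => gaugeE_vpolar U _
    simp only [h3]
    apply le_antisymm
    · exact iSup₂_le fun u hu => iSup₂_le fun v hv =>
        le_iSup₂_of_le v hv (le_iSup₂_of_le u hu le_rfl)
    · exact iSup₂_le fun v hv => iSup₂_le fun u hu =>
        le_iSup₂_of_le u hu (le_iSup₂_of_le v hv le_rfl)
  · rw [h1]
    apply le_antisymm
    · exact iSup₂_le fun u hu => iSup₂_le fun v hv =>
        le_iSup₂_of_le u (gaugeE_le_one_of_mem hu) (le_iSup₂_of_le v (gaugeE_le_one_of_mem hv) le_rfl)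
    · refine iSup₂_le fun u hu => iSup₂_le fun v hv => ?_
      have hucvx : u ∈ cvx U := mem_cvx_of_gaugeE_le_one U u hu
      have hvcvx : v ∈ cvx V := mem_cvx_of_gaugeE_le_one V v hv
      calc ENNReal.ofReal (u ⬝ᵥ Y.mulVec v)
          ≤ ⨆ u' ∈ U, ENNReal.ofReal (u' ⬝ᵥ Y.mulVec v) := by
            refine ofReal_le_biSup_of_mem_cvx U (fun w => w ⬝ᵥ Y.mulVec v) ?_ ?_ hucvx
            · have := dot_linear (Y.mulVec v)
              constructor
              · intro y z; rw [add_dotProduct]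
              · intro r y; rw [smul_dotProduct]
            · have : (fun w : Fin n → ℝ => w ⬝ᵥ Y.mulVec v)
                  = fun w => (Y.mulVec v) ⬝ᵥ w := by
                ext w; rw [dotProduct_comm]
              rw [this]; exact dot_continuous _
        _ ≤ ⨆ u' ∈ U, ⨆ v' ∈ V, ENNReal.ofReal (u' ⬝ᵥ Y.mulVec v') := by
            refine iSup₂_le fun u' hu' => le_iSup₂_of_le u' hu' ?_
            have hfx : ∀ w : Fin d → ℝ, u' ⬝ᵥ Y.mulVec w = (Y.vecMul u') ⬝ᵥ w := by
              intro w; rw [Matrix.dotProduct_mulVec]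
            simp only [hfx]
            exact ofReal_le_biSup_of_mem_cvx V (fun w => (Y.vecMul u') ⬝ᵥ w)
              (dot_linear _) (dot_continuous _) hvcvx
  done

end
end

section
/- Let n ≥ 2 and let X_1, …, X_r be independent, identically distributed random variables, each with the Beta distribution with parameters (1/2, (n−1)/2). Then E[max_{1 ≤ i ≤ r} X_i] ≤ (4 log r + 16)/n. -/
open MeasureTheory ProbabilityTheory
open scoped NNReal ENNReal

noncomputable section

/-- The Beta distribution with parameters `(a, b)` on `[0, 1]`, with density
`x^{a−1} (1−x)^{b−1} / B(a, b)`, where `B(a, b) = Γ(a) Γ(b) / Γ(a+b)`. -/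
def betaMeasure (a b : ℝ) : Measure ℝ :=
  (volume.restrict (Set.Ioo (0 : ℝ) 1)).withDensity fun x =>
    ENNReal.ofReal (x ^ (a - 1) * (1 - x) ^ (b - 1) /
      (Real.Gamma a * Real.Gamma b / Real.Gamma (a + b)))

lemma real_betaIntegral {a b : ℝ} (ha : 0 < a) (hb : 0 < b) :
    ∫ x in Set.Ioo (0:ℝ) 1, x ^ (a-1) * (1-x) ^ (b-1) =
      Real.Gamma a * Real.Gamma b / Real.Gamma (a+b) := by
  have key : Complex.Gamma a * Complex.Gamma b
      = Complex.Gamma (a+b) * Complex.betaIntegral a b :=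
    by simpa using Complex.Gamma_mul_Gamma_eq_betaIntegral (by simpa using ha) (by simpa using hb)
  have hbeta : Complex.betaIntegral a b
      = ((∫ x in Set.Ioo (0:ℝ) 1, x ^ (a-1) * (1-x) ^ (b-1) : ℝ) : ℂ) := by
    rw [Complex.betaIntegral, intervalIntegral.integral_of_le zero_le_one,
      ← MeasureTheory.Measure.restrict_congr_set MeasureTheory.Ioo_ae_eq_Ioc]
    calc (∫ x in Set.Ioo (0:ℝ) 1, (x:ℂ) ^ ((a:ℂ)-1) * (1-(x:ℂ)) ^ ((b:ℂ)-1))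
        = ∫ x in Set.Ioo (0:ℝ) 1, ((x ^ (a-1) * (1-x) ^ (b-1) : ℝ) : ℂ) := by
          refine setIntegral_congr_fun measurableSet_Ioo (fun x hx => ?_)
          obtain ⟨hx0, hx1⟩ := hx
          rw [Complex.ofReal_mul, Complex.ofReal_cpow hx0.le, Complex.ofReal_cpow (by linarith)]
          push_cast
          ring
      _ = _ := integral_ofReal
  rw [hbeta] at key
  have hG : Real.Gamma (a+b) ≠ 0 := (Real.Gamma_pos_of_pos (by linarith)).ne'
  have h2 : Real.Gamma a * Real.Gamma b
      = Real.Gamma (a+b) * ∫ x in Set.Ioo (0:ℝ) 1, x ^ (a-1) * (1-x) ^ (b-1) := by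
    have := key
    rw [← Complex.ofReal_add, Complex.Gamma_ofReal, Complex.Gamma_ofReal,
      Complex.Gamma_ofReal] at this
    exact_mod_cast this
  field_simp
  linarith

lemma Gamma_add_nat (a : ℝ) (ha : 0 < a) (k : ℕ) :
    Real.Gamma (a + k) = (∏ j ∈ Finset.range k, (a + j)) * Real.Gamma a := by
  induction k with
  | zero => simp
  | succ k ih =>
    have h1 : a + (k+1:ℕ) = (a + k) + 1 := by push_cast; ring
    rw [h1, Real.Gamma_add_one (by positivity), ih, Finset.prod_range_succ]
    push_cast
    ring

lemma betaMeasure_integral (a b : ℝ) (g : ℝ → ℝ) :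
    ∫ x, g x ∂_root_.betaMeasure a b
      = ∫ x in Set.Ioo (0:ℝ) 1,
          ((x ^ (a - 1) * (1 - x) ^ (b - 1) /
            (Real.Gamma a * Real.Gamma b / Real.Gamma (a + b))).toNNReal : ℝ≥0) • g x := by
  rw [_root_.betaMeasure]
  have hm : Measurable (fun x : ℝ => (x ^ (a - 1) * (1 - x) ^ (b - 1) /
      (Real.Gamma a * Real.Gamma b / Real.Gamma (a + b))).toNNReal) := by
    fun_prop
  exact integral_withDensity_eq_integral_smul₀ hm.aemeasurable g

lemma betaMeasure_moment (a b : ℝ) (ha : 0 < a) (hb : 0 < b) (k : ℕ) :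
    ∫ x, x ^ k ∂_root_.betaMeasure a b
      = (∏ j ∈ Finset.range k, (a + j)) / (∏ j ∈ Finset.range k, (a + b + j)) := by
  have hGa := Real.Gamma_pos_of_pos ha
  have hGb := Real.Gamma_pos_of_pos hb
  have hGab := Real.Gamma_pos_of_pos (by linarith : (0:ℝ) < a + b)
  set B : ℝ := Real.Gamma a * Real.Gamma b / Real.Gamma (a + b) with hBdef
  have hB : 0 < B := by positivity
  rw [betaMeasure_integral]
  have hcongr : ∫ x in Set.Ioo (0:ℝ) 1,
        ((x ^ (a - 1) * (1 - x) ^ (b - 1) / B).toNNReal : ℝ≥0) • x ^ k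
      = ∫ x in Set.Ioo (0:ℝ) 1, (x ^ ((a + k) - 1) * (1 - x) ^ (b - 1)) * B⁻¹ := by
    refine setIntegral_congr_fun measurableSet_Ioo (fun x hx => ?_)
    obtain ⟨hx0, hx1⟩ := hx
    have hρ : 0 ≤ x ^ (a - 1) * (1 - x) ^ (b - 1) / B := by
      have := Real.rpow_nonneg hx0.le (a-1)
      have := Real.rpow_nonneg (by linarith : (0:ℝ) ≤ 1 - x) (b-1)
      positivity
    rw [NNReal.smul_def, Real.coe_toNNReal _ hρ, smul_eq_mul]
    rw [show x ^ ((a + k) - 1) = x ^ (a - 1) * x ^ k by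
      rw [← Real.rpow_natCast x k, ← Real.rpow_add hx0]; ring_nf]
    ring
  rw [hcongr, integral_mul_const, real_betaIntegral (by positivity) hb]
  rw [show a + (k:ℝ) + b = (a + b) + k by ring]
  rw [Gamma_add_nat a ha k, Gamma_add_nat (a+b) (by linarith) k]
  have hQ : 0 < ∏ j ∈ Finset.range k, (a + b + (j:ℝ)) :=
    Finset.prod_pos (fun j _ => by positivity)
  rw [hBdef]
  field_simp

lemma prod_odd_le (k : ℕ) : (∏ j ∈ Finset.range k, (2*(j:ℝ)+1)) ≤ (k:ℝ)^k := by
  induction k with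
  | zero => simp
  | succ k ih =>
    rw [Finset.prod_range_succ]
    rcases Nat.eq_zero_or_pos k with hk | hk
    · subst hk; simp
    · have hkpos : (0:ℝ) < k := by exact_mod_cast hk
      have hkk : (0:ℝ) < (k:ℝ)^k := pow_pos hkpos k
      have h2 : (2:ℝ) * (k:ℝ)^k ≤ ((k:ℝ)+1)^k := by
        have hb := one_add_mul_le_pow (a := 1/(k:ℝ))
          (by have := one_div_nonneg.mpr hkpos.le; linarith) k
        have hb2 : (2:ℝ) ≤ (1 + 1/(k:ℝ))^k := by
          refine le_trans (le_of_eq ?_) hb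
          field_simp
          norm_num
        have hmul : (1 + 1/(k:ℝ))^k * (k:ℝ)^k = ((k:ℝ)+1)^k := by
          rw [← mul_pow]; congr 1; field_simp
        nlinarith
      have step1 : (∏ j ∈ Finset.range k, (2*(j:ℝ)+1)) * (2*(k:ℝ)+1)
          ≤ (k:ℝ)^k * (2*(k:ℝ)+1) := by
        apply mul_le_mul_of_nonneg_right ih (by positivity)
      refine step1.trans ?_
      push_cast
      have hexp : ((k:ℝ)+1)^(k+1) = ((k:ℝ)+1) * ((k:ℝ)+1)^k := by ring
      rw [hexp]
      nlinarith

lemma moment_bound (n : ℕ) (hn : 2 ≤ n) (k : ℕ) :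
    ∫ x, x ^ k ∂_root_.betaMeasure (1/2) (((n:ℝ)-1)/2) ≤ (k:ℝ)^k / (n:ℝ)^k := by
  have hn2 : (2:ℝ) ≤ (n:ℝ) := by exact_mod_cast hn
  rw [betaMeasure_moment _ _ (by norm_num) (by linarith)]
  have hstep : (∏ j ∈ Finset.range k, ((1/2:ℝ) + j)) /
        (∏ j ∈ Finset.range k, ((1/2:ℝ) + ((n:ℝ)-1)/2 + j))
      ≤ ∏ j ∈ Finset.range k, ((2*(j:ℝ)+1) / (n:ℝ)) := by
    rw [← Finset.prod_div_distrib]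
    apply Finset.prod_le_prod
    · intro j _
      have hj : (0:ℝ) ≤ j := Nat.cast_nonneg j
      have hd : (0:ℝ) < (1/2:ℝ) + ((n:ℝ)-1)/2 + j := by linarith
      have hnum : (0:ℝ) ≤ (1/2:ℝ) + j := by linarith
      exact div_nonneg hnum hd.le
    · intro j _
      have hj : (0:ℝ) ≤ j := Nat.cast_nonneg j
      have hd : (0:ℝ) < (1/2:ℝ) + ((n:ℝ)-1)/2 + j := by linarith
      rw [div_le_div_iff₀ hd (by linarith)]
      nlinarith
  refine hstep.trans ?_
  rw [Finset.prod_div_distrib, Finset.prod_const, Finset.card_range]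
  have hnk : (0:ℝ) < (n:ℝ)^k := by positivity
  exact div_le_div_of_nonneg_right (prod_odd_le k) hnk.le

lemma betaMeasure_compl_Ioo (a b : ℝ) : _root_.betaMeasure a b (Set.Ioo (0:ℝ) 1)ᶜ = 0 := by
  rw [_root_.betaMeasure, withDensity_apply _ measurableSet_Ioo.compl,
    Measure.restrict_restrict measurableSet_Ioo.compl]
  simp

/-- If `X_1, …, X_r` are i.i.d. `Beta(1/2, (n−1)/2)` random variables with `n ≥ 2`, then
`E[max_i X_i] ≤ (4 log r + 16)/n`. -/
theorem statement19 {Ω : Type*} [MeasurableSpace Ω] (μ : Measure Ω) [IsProbabilityMeasure μ]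
    (n : ℕ) (hn : 2 ≤ n) (r : ℕ) (hr : 1 ≤ r)
    (X : Fin r → Ω → ℝ) (hmeas : ∀ i, Measurable (X i))
    (hdist : ∀ i, μ.map (X i) = _root_.betaMeasure (1 / 2) (((n : ℝ) - 1) / 2))
    (hindep : iIndepFun X μ) :
    (∫ ω, (⨆ i, X i ω) ∂μ) ≤ (4 * Real.log r + 16) / n := by
  haveI hne : Nonempty (Fin r) := Fin.pos_iff_nonempty.mp hr
  set Y : Ω → ℝ := fun ω => ⨆ i, X i ω with hYdef
  -- measurability of Y
  have hYmeas : Measurable Y := by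
    have h1 : Y = Finset.univ.sup' Finset.univ_nonempty X := by
      funext ω
      show (⨆ i, X i ω) = _
      rw [Finset.sup'_apply, Finset.sup'_univ_eq_ciSup]
    rw [h1]
    exact Finset.measurable_sup' Finset.univ_nonempty (fun i _ => hmeas i)
  -- a.e. all X i in Ioo 0 1
  have hae : ∀ᵐ ω ∂μ, ∀ i, X i ω ∈ Set.Ioo (0:ℝ) 1 := by
    rw [MeasureTheory.ae_all_iff]
    intro i
    have : μ (X i ⁻¹' (Set.Ioo (0:ℝ) 1)ᶜ) = 0 := by
      rw [← Measure.map_apply (hmeas i) measurableSet_Ioo.compl, hdist i,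
        betaMeasure_compl_Ioo]
    rw [MeasureTheory.ae_iff]
    exact this
  -- a.e. properties of Y
  have hYmem : ∀ᵐ ω ∂μ, Y ω ∈ Set.Icc (0:ℝ) 1 := by
    filter_upwards [hae] with ω hω
    constructor
    · exact le_trans (hω (Classical.arbitrary _)).1.le
        (le_ciSup (f := fun i => X i ω) (Set.Finite.bddAbove (Set.finite_range _))
          (Classical.arbitrary _))
    · exact ciSup_le (fun i => (hω i).2.le)
  set k : ℕ := max 1 ⌈Real.log r⌉₊ with hkdef
  have hk1 : 1 ≤ k := le_max_left _ _
  -- integrability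
  have hYint : Integrable Y μ := by
    refine (integrable_const (1:ℝ)).mono' hYmeas.aestronglyMeasurable ?_
    filter_upwards [hYmem] with ω hω
    rw [Real.norm_eq_abs, abs_le]
    exact ⟨by linarith [hω.1], hω.2⟩
  have hYkint : Integrable (fun ω => Y ω ^ k) μ := by
    refine (integrable_const (1:ℝ)).mono' (hYmeas.pow_const k).aestronglyMeasurable ?_
    filter_upwards [hYmem] with ω hω
    rw [Real.norm_eq_abs, abs_le]
    constructor
    · have := pow_nonneg hω.1 k; linarith
    · exact pow_le_one₀ hω.1 hω.2
  have hXkint : ∀ i, Integrable (fun ω => X i ω ^ k) μ := by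
    intro i
    refine (integrable_const (1:ℝ)).mono' ((hmeas i).pow_const k).aestronglyMeasurable ?_
    filter_upwards [hae] with ω hω
    rw [Real.norm_eq_abs, abs_le]
    constructor
    · have := pow_nonneg (hω i).1.le k; linarith
    · exact pow_le_one₀ (hω i).1.le (hω i).2.le
  -- Jensen
  have hjensen : (∫ ω, Y ω ∂μ) ^ k ≤ ∫ ω, Y ω ^ k ∂μ := by
    have hconv : ConvexOn ℝ (Set.Ici (0:ℝ)) (fun x : ℝ => x ^ k) := convexOn_pow k
    have := hconv.map_integral_le (continuous_pow k).continuousOn isClosed_Ici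
      (by filter_upwards [hYmem] with ω hω using hω.1) hYint ?hgi
    · exact this
    case hgi => exact hYkint
  -- sup^k ≤ sum
  have hsum : ∫ ω, Y ω ^ k ∂μ ≤ ∑ i, ∫ ω, X i ω ^ k ∂μ := by
    rw [← integral_finset_sum _ (fun i _ => hXkint i)]
    refine integral_mono_ae hYkint (integrable_finset_sum _ (fun i _ => hXkint i)) ?_
    filter_upwards [hae] with ω hω
    obtain ⟨i₀, hi₀⟩ := Finite.exists_max (fun i => X i ω)
    have hY0 : Y ω = X i₀ ω :=
      le_antisymm (ciSup_le hi₀)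
        (le_ciSup (f := fun i => X i ω) (Set.Finite.bddAbove (Set.finite_range _)) i₀)
    rw [hY0]
    exact Finset.single_le_sum (f := fun i => X i ω ^ k)
      (fun i _ => pow_nonneg (hω i).1.le k) (Finset.mem_univ i₀)
  -- moments
  have hmom : ∀ i, ∫ ω, X i ω ^ k ∂μ ≤ (k:ℝ)^k / (n:ℝ)^k := by
    intro i
    have : ∫ ω, X i ω ^ k ∂μ = ∫ x, x ^ k ∂(μ.map (X i)) := by
      rw [integral_map (hmeas i).aemeasurable]
      exact (measurable_id.pow_const k).aestronglyMeasurable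
    rw [this, hdist i]
    exact moment_bound n hn k
  -- combine
  have hn0 : (0:ℝ) < n := by
    have : (2:ℝ) ≤ n := by exact_mod_cast hn
    linarith
  have hr0 : (1:ℝ) ≤ r := by exact_mod_cast hr
  have hlog : 0 ≤ Real.log r := Real.log_nonneg hr0
  have hklog : Real.log r ≤ k := by
    refine le_trans (Nat.le_ceil _) ?_
    exact_mod_cast Nat.cast_le.mpr (le_max_right 1 ⌈Real.log r⌉₊)
  have hkle : (k:ℝ) ≤ Real.log r + 1 := by
    rw [hkdef]
    push_cast [Nat.cast_max]
    refine max_le (by linarith) ?_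
    exact (Nat.ceil_lt_add_one hlog).le
  have hr3k : (r:ℝ) ≤ 3 ^ k := by
    have h1 : (r:ℝ) = Real.exp (Real.log r) := (Real.exp_log (by linarith)).symm
    have h2 : Real.exp (Real.log r) ≤ Real.exp k := Real.exp_le_exp.mpr hklog
    have h3 : Real.exp (k:ℝ) = Real.exp 1 ^ k := by
      rw [← Real.exp_nat_mul]; norm_num
    have h4 : Real.exp 1 ^ k ≤ 3 ^ k :=
      pow_le_pow_left₀ (Real.exp_pos 1).le
        (Real.exp_one_lt_d9.le.trans (by norm_num)) k
    calc (r:ℝ) = Real.exp (Real.log r) := h1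
      _ ≤ Real.exp k := h2
      _ = Real.exp 1 ^ k := h3
      _ ≤ 3 ^ k := h4
  have hIY : 0 ≤ ∫ ω, Y ω ∂μ :=
    integral_nonneg_of_ae (by filter_upwards [hYmem] with ω hω using hω.1)
  have hchain : (∫ ω, Y ω ∂μ) ^ k ≤ (3 * k / n) ^ k := by
    calc (∫ ω, Y ω ∂μ) ^ k ≤ ∫ ω, Y ω ^ k ∂μ := hjensen
      _ ≤ ∑ i, ∫ ω, X i ω ^ k ∂μ := hsum
      _ ≤ ∑ _i : Fin r, (k:ℝ)^k / (n:ℝ)^k :=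
          Finset.sum_le_sum (fun i _ => hmom i)
      _ = (r:ℝ) * ((k:ℝ)^k / (n:ℝ)^k) := by
          rw [Finset.sum_const, Finset.card_univ, Fintype.card_fin, nsmul_eq_mul]
      _ ≤ 3 ^ k * ((k:ℝ)^k / (n:ℝ)^k) := by
          apply mul_le_mul_of_nonneg_right hr3k (by positivity)
      _ = (3 * k / n) ^ k := by
          rw [div_pow, mul_pow]; ring
  have hfin : ∫ ω, Y ω ∂μ ≤ 3 * k / n := by
    refine le_of_pow_le_pow_left₀ (by omega) (by positivity) hchain
  refine hfin.trans ?_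
  rw [div_le_div_iff₀ hn0 hn0]
  nlinarith

end
end
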